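/- arXiv:2504.21783 — 5 statements merged into one kernel-verified Lean document; each statement's English description precedes it below -/
import Mathlib

section
/- Let C₀, E₀, C₁, E₁, C₂, E₂, ω₁, ω₂ be positive reals; set δ₀ = C₀/E₀, δ₁ = C₁/E₁, δ₂ = C₂/E₂, δ = δ₀δ₁δ₂, and ξ = (1/E₁)(1 + C₁/E₀ + C₀C₁/(E₀E₂)). Define (with ε = 1 and angles taken in ℝ, i.e. working with real lifts of the angular coordinates) the maps Π₁(r₁, φ₁, φ₂) = ((1−r₁)^{δ₁}, φ₁ − (ω₁/E₁)ln(1−r₁), φ₂ − (ω₂/E₁)ln(1−r₁)) for 0 ≤ r₁ < 1; Π₀(r₂, φ₁, φ₂) = (r₂^{δ₀}, φ₁ − (ω₁/E₀)ln r₂, φ₂ − (ω₂/E₀)ln r₂) for 0 < r₂ ≤ 1; and Π₂(r₁, φ₁, φ₂) = (1 − r₁^{δ₂}, φ₁ − (ω₁/E₂)ln r₁, φ₂ − (ω₂/E₂)ln r₁) for 0 < r₁ ≤ 1. Then for every r₁ ∈ [0,1) and φ₁, φ₂ ∈ ℝ, the composition Π₂∘Π₀∘Π₁ applied to (r₁,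 φ₁, φ₂) yields the point with radial coordinate 1 − (1−r₁)^{δ} and angular coordinates φ₁ − ξω₁·ln(1−r₁) and φ₂ − ξω₂·ln(1−r₁). -/
/-- Composition of the three local transition maps (with `ε = 1`, angles in ℝ):
for `r₁ ∈ [0,1)` and `φ₁, φ₂ ∈ ℝ`, `Pi₂∘Pi₀∘Pi₁` sends `(r₁, φ₁, φ₂)` to the point
with radial coordinate `1 − (1−r₁)^δ` and angular coordinates
`φ₁ − ξω₁ ln(1−r₁)` and `φ₂ − ξω₂ ln(1−r₁)`. -/
theorem stmt_5 (C₀ E₀ C₁ E₁ C₂ E₂ ω₁ ω₂ : ℝ)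
    (hC₀ : 0 < C₀) (hE₀ : 0 < E₀) (hC₁ : 0 < C₁) (hE₁ : 0 < E₁)
    (hC₂ : 0 < C₂) (hE₂ : 0 < E₂) (hω₁ : 0 < ω₁) (hω₂ : 0 < ω₂)
    (δ₀ δ₁ δ₂ δ ξ : ℝ)
    (hδ₀ : δ₀ = C₀ / E₀) (hδ₁ : δ₁ = C₁ / E₁) (hδ₂ : δ₂ = C₂ / E₂)
    (hδ : δ = δ₀ * δ₁ * δ₂)
    (hξ : ξ = (1 / E₁) * (1 + C₁ / E₀ + C₀ * C₁ / (E₀ * E₂)))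
    (Pi₁ Pi₀ Pi₂ : ℝ × ℝ × ℝ → ℝ × ℝ × ℝ)
    (hPi₁ : ∀ r₁ φ₁ φ₂ : ℝ, Pi₁ (r₁, φ₁, φ₂) =
      ((1 - r₁) ^ δ₁,
       φ₁ - (ω₁ / E₁) * Real.log (1 - r₁),
       φ₂ - (ω₂ / E₁) * Real.log (1 - r₁)))
    (hPi₀ : ∀ r₂ φ₁ φ₂ : ℝ, Pi₀ (r₂, φ₁, φ₂) =
      (r₂ ^ δ₀,
       φ₁ - (ω₁ / E₀) * Real.log r₂,
       φ₂ - (ω₂ / E₀) * Real.log r₂))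
    (hPi₂ : ∀ r₁ φ₁ φ₂ : ℝ, Pi₂ (r₁, φ₁, φ₂) =
      (1 - r₁ ^ δ₂,
       φ₁ - (ω₁ / E₂) * Real.log r₁,
       φ₂ - (ω₂ / E₂) * Real.log r₁)) :
    ∀ r₁ ∈ Set.Ico (0 : ℝ) 1, ∀ φ₁ φ₂ : ℝ,
      Pi₂ (Pi₀ (Pi₁ (r₁, φ₁, φ₂))) =
        (1 - (1 - r₁) ^ δ,
         φ₁ - ξ * ω₁ * Real.log (1 - r₁),
         φ₂ - ξ * ω₂ * Real.log (1 - r₁)) := by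
  intro r₁ hr φ₁ φ₂
  have h1 : (0:ℝ) < 1 - r₁ := by linarith [hr.2]
  have h2 : (0:ℝ) < (1 - r₁) ^ δ₁ := Real.rpow_pos_of_pos h1 _
  have h3 : (0:ℝ) < ((1 - r₁) ^ δ₁) ^ δ₀ := Real.rpow_pos_of_pos h2 _
  rw [hPi₁, hPi₀, hPi₂]
  have l1 : Real.log ((1 - r₁) ^ δ₁) = δ₁ * Real.log (1 - r₁) := Real.log_rpow h1 _
  have l2 : Real.log (((1 - r₁) ^ δ₁) ^ δ₀) = δ₀ * (δ₁ * Real.log (1 - r₁)) := by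
    rw [Real.log_rpow h2, l1]
  have p1 : (((1 - r₁) ^ δ₁) ^ δ₀) ^ δ₂ = (1 - r₁) ^ δ := by
    rw [← Real.rpow_mul h1.le, ← Real.rpow_mul h1.le, hδ]
    ring_nf
  rw [p1, l1, l2]
  refine Prod.ext rfl (Prod.ext ?_ ?_) <;> simp only [] <;>
    subst hδ₀ hδ₁ hδ₂ hξ <;> field_simp <;> ring
end

section
/- Let δ, ξ, ω₁, ω₂ > 0 and let Ξ : ℝ² → ℝ be a C¹ map which is constant on the unit circle. Define M(s) = 1 − (1−s)^{1/δ}, W(s,φ) = φ + (ξω₂/δ)ln(1−s), u(s,φ) = M(s)cos W(s,φ), v(s,φ) = M(s)sin W(s,φ), and Υ(s,φ) = Ξ(u(s,φ), v(s,φ)) − (ξω₁/δ)·ln(1−s) for s ∈ [0,1), φ ∈ ℝ. Then for each s ∈ (0,1) and φ ∈ ℝ the partial derivative ∂Υ/∂s exists and can be written as ∂Υ/∂s(s,φ) = (1/(1−s))·[ξω₁/δ + R(s,φ)], where R(s,φ) → 0 as s → 1⁻ uniformly in φ; that is, for every η > 0 there exists s₀ ∈ (0,1) such that for all s ∈ (s₀,1)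 and all φ ∈ ℝ, |(1−s)·∂Υ/∂s(s,φ) − ξω₁/δ| < η. -/
set_option maxHeartbeats 1000000 in
/-- Claim 1 of Proposition 5.5: the partial derivative `∂Υ/∂s` exists on `(0,1)` and
`(1−s)·∂Υ/∂s(s,φ) → ξω₁/δ` as `s → 1⁻`, uniformly in `φ`; i.e. writing
`∂Υ/∂s = (1/(1−s))·[ξω₁/δ + R(s,φ)]`, the remainder `R(s,φ) → 0` uniformly in `φ`. -/
theorem stmt_9 (δ ξ ω₁ ω₂ : ℝ) (hδ : 0 < δ) (hξ : 0 < ξ) (hω₁ : 0 < ω₁) (hω₂ : 0 < ω₂)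
    (Ξ : ℝ × ℝ → ℝ) (hΞ : ContDiff ℝ 1 Ξ)
    (c : ℝ) (hconst : ∀ p : ℝ × ℝ, p.1 ^ 2 + p.2 ^ 2 = 1 → Ξ p = c)
    (M : ℝ → ℝ) (W : ℝ → ℝ → ℝ) (Υ : ℝ → ℝ → ℝ)
    (hM : ∀ s : ℝ, M s = 1 - (1 - s) ^ (1 / δ))
    (hW : ∀ s φ : ℝ, W s φ = φ + (ξ * ω₂ / δ) * Real.log (1 - s))
    (hΥ : ∀ s φ : ℝ, Υ s φ =
      Ξ (M s * Real.cos (W s φ), M s * Real.sin (W s φ))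
        - (ξ * ω₁ / δ) * Real.log (1 - s)) :
    (∀ s ∈ Set.Ioo (0 : ℝ) 1, ∀ φ : ℝ, DifferentiableAt ℝ (fun s' => Υ s' φ) s) ∧
    (∀ η > (0 : ℝ), ∃ s₀ ∈ Set.Ioo (0 : ℝ) 1, ∀ s ∈ Set.Ioo s₀ 1, ∀ φ : ℝ,
      |(1 - s) * deriv (fun s' => Υ s' φ) s - ξ * ω₁ / δ| < η) := by
  have hδ' : (0:ℝ) < 1/δ := by positivity
  have hκ₂ : (0:ℝ) < ξ * ω₂ / δ := by positivity
  have hΞdiff : Differentiable ℝ Ξ := hΞ.differentiable one_ne_zero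
  -- tangential derivative of Ξ vanishes on the circle
  have Htan : ∀ θ : ℝ, (fderiv ℝ Ξ (Real.cos θ, Real.sin θ)) (Real.sin θ, -(Real.cos θ)) = 0 := by
    intro θ
    have hc : HasDerivAt (fun t : ℝ => ((Real.cos t, Real.sin t) : ℝ × ℝ))
        (-(Real.sin θ), Real.cos θ) θ :=
      HasDerivAt.prodMk (Real.hasDerivAt_cos θ) (Real.hasDerivAt_sin θ)
    have hcomp : HasDerivAt (fun t => Ξ (Real.cos t, Real.sin t))
        ((fderiv ℝ Ξ (Real.cos θ, Real.sin θ)) (-(Real.sin θ), Real.cos θ)) θ :=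
      (hΞdiff (Real.cos θ, Real.sin θ)).hasFDerivAt.comp_hasDerivAt θ hc
    have hconstf : (fun t => Ξ (Real.cos t, Real.sin t)) = fun _ => c := by
      funext t; exact hconst _ (by simp [Real.cos_sq_add_sin_sq])
    rw [hconstf] at hcomp
    have h0 := (hasDerivAt_const θ c).unique hcomp
    have hneg : ((Real.sin θ, -(Real.cos θ)) : ℝ × ℝ) = -(-(Real.sin θ), Real.cos θ) := by
      simp [Prod.ext_iff]
    rw [hneg, map_neg, ← h0, neg_zero]
  -- uniform smallness of tangential derivative near the circle
  have Hunif : ∀ η > (0:ℝ), ∃ ε > (0:ℝ), ∀ m : ℝ, 1 - ε ≤ m → m ≤ 1 → ∀ θ : ℝ,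
      |(fderiv ℝ Ξ (m * Real.cos θ, m * Real.sin θ)) (m * Real.sin θ, -(m * Real.cos θ))| < η := by
    intro η hη
    set H : ℝ × ℝ → ℝ := fun p => (fderiv ℝ Ξ p) (p.2, -p.1) with hH
    have hHcont : Continuous H :=
      (hΞ.continuous_fderiv one_ne_zero).clm_apply (continuous_snd.prodMk continuous_fst.neg)
    have hUC : UniformContinuousOn H (Metric.closedBall (0:ℝ×ℝ) 2) :=
      (isCompact_closedBall _ _).uniformContinuousOn_of_continuous hHcont.continuousOn
    rw [Metric.uniformContinuousOn_iff] at hUC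
    obtain ⟨d, hd, hball⟩ := hUC η hη
    refine ⟨min d 1 / 2, by positivity, ?_⟩
    intro m hm1 hm2 θ
    have hm0 : 0 ≤ m := by
      have : min d 1 / 2 ≤ 1/2 := by
        have := min_le_right d 1; linarith
      linarith
    set p : ℝ × ℝ := (m * Real.cos θ, m * Real.sin θ) with hp
    set q : ℝ × ℝ := (Real.cos θ, Real.sin θ) with hq
    have hqn : ‖q‖ ≤ 1 := by
      rw [Prod.norm_def]
      simp only [Real.norm_eq_abs]
      exact max_le (Real.abs_cos_le_one θ) (Real.abs_sin_le_one θ)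
    have hpn : ‖p‖ ≤ 1 := by
      rw [Prod.norm_def]
      simp only [hp, Real.norm_eq_abs, abs_mul]
      apply max_le
      · calc |m| * |Real.cos θ| ≤ 1 * 1 := by
              apply mul_le_mul (by rwa [abs_of_nonneg hm0]) (Real.abs_cos_le_one θ)
                (abs_nonneg _) zero_le_one
        _ = 1 := by ring
      · calc |m| * |Real.sin θ| ≤ 1 * 1 := by
              apply mul_le_mul (by rwa [abs_of_nonneg hm0]) (Real.abs_sin_le_one θ)
                (abs_nonneg _) zero_le_one
        _ = 1 := by ring
    have hpm : p ∈ Metric.closedBall (0:ℝ×ℝ) 2 := by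
      rw [Metric.mem_closedBall, dist_zero_right]; linarith
    have hqm : q ∈ Metric.closedBall (0:ℝ×ℝ) 2 := by
      rw [Metric.mem_closedBall, dist_zero_right]; linarith
    have hdist : dist p q < d := by
      rw [dist_eq_norm]
      have : p - q = ((m - 1) * Real.cos θ, (m - 1) * Real.sin θ) := by
        simp [hp, hq, Prod.ext_iff]; constructor <;> ring
      rw [this, Prod.norm_def]
      simp only [Real.norm_eq_abs, abs_mul]
      have h1 : |m - 1| ≤ min d 1 / 2 := by
        rw [abs_le]; constructor <;> linarith
      have hd2 : min d 1 / 2 < d := by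
        have := min_le_left d 1; linarith
      apply lt_of_le_of_lt (max_le ?_ ?_) hd2
      · calc |m-1| * |Real.cos θ| ≤ |m-1| * 1 :=
              mul_le_mul_of_nonneg_left (Real.abs_cos_le_one θ) (abs_nonneg _)
        _ ≤ min d 1 / 2 := by linarith
      · calc |m-1| * |Real.sin θ| ≤ |m-1| * 1 :=
              mul_le_mul_of_nonneg_left (Real.abs_sin_le_one θ) (abs_nonneg _)
        _ ≤ min d 1 / 2 := by linarith
    have hfin := hball p hpm q hqm hdist
    rw [Real.dist_eq] at hfin
    have hHq : H q = 0 := Htan θ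
    rw [hHq, sub_zero] at hfin
    exact hfin
  -- the derivative formula
  have key : ∀ s ∈ Set.Ioo (0:ℝ) 1, ∀ φ : ℝ,
      HasDerivAt (fun s' => Υ s' φ)
        ((fderiv ℝ Ξ (M s * Real.cos (W s φ), M s * Real.sin (W s φ)))
          (1/δ * (1-s)^(1/δ-1) * Real.cos (W s φ)
              + M s * (-Real.sin (W s φ) * (ξ * ω₂ / δ * -(1-s)⁻¹)),
           1/δ * (1-s)^(1/δ-1) * Real.sin (W s φ)
              + M s * (Real.cos (W s φ) * (ξ * ω₂ / δ * -(1-s)⁻¹)))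
          + (ξ * ω₁ / δ) * (1-s)⁻¹) s := by
    intro s hs φ
    obtain ⟨hs0, hs1⟩ := hs
    have h1s : (0:ℝ) < 1 - s := by linarith
    have h1 : HasDerivAt (fun s' : ℝ => 1 - s') (-1) s := (hasDerivAt_id s).const_sub 1
    have hlog : HasDerivAt (fun s' : ℝ => Real.log (1 - s')) (-(1-s)⁻¹) s := by
      have := HasDerivAt.comp s (Real.hasDerivAt_log (ne_of_gt h1s)) h1
      rw [show (-(1-s)⁻¹) = (1-s)⁻¹ * -1 by ring]; exact this
    have ha : HasDerivAt (fun s' : ℝ => (1 - s') ^ (1/δ)) (-(1/δ * (1-s)^(1/δ-1))) s := by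
      have := HasDerivAt.comp s (Real.hasDerivAt_rpow_const (p := 1/δ) (Or.inl (ne_of_gt h1s))) h1
      rw [show (-(1/δ * (1-s)^(1/δ-1))) = (1/δ * (1-s)^(1/δ-1)) * -1 by ring]; exact this
    have hMd : HasDerivAt M (1/δ * (1-s)^(1/δ-1)) s := by
      have hMe : M = fun s' => 1 - (1-s')^(1/δ) := funext hM
      rw [hMe]
      simpa using ha.const_sub 1
    have hWd : HasDerivAt (fun s' => W s' φ) (ξ * ω₂ / δ * -(1-s)⁻¹) s := by
      have hWe : (fun s' => W s' φ) = fun s' => φ + (ξ * ω₂ / δ) * Real.log (1-s') :=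
        funext fun s' => hW s' φ
      rw [hWe]
      exact (hlog.const_mul _).const_add φ
    have hcos : HasDerivAt (fun s' => Real.cos (W s' φ))
        (-Real.sin (W s φ) * (ξ * ω₂ / δ * -(1-s)⁻¹)) s :=
      by have := HasDerivAt.comp s (Real.hasDerivAt_cos (W s φ)) hWd; exact this
    have hsin : HasDerivAt (fun s' => Real.sin (W s' φ))
        (Real.cos (W s φ) * (ξ * ω₂ / δ * -(1-s)⁻¹)) s :=
      by have := HasDerivAt.comp s (Real.hasDerivAt_sin (W s φ)) hWd; exact this
    have hu := hMd.mul hcos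
    have hv := hMd.mul hsin
    have hγ := HasDerivAt.prodMk hu hv
    have hΞd : HasFDerivAt Ξ (fderiv ℝ Ξ (M s * Real.cos (W s φ), M s * Real.sin (W s φ)))
        (M s * Real.cos (W s φ), M s * Real.sin (W s φ)) :=
      (hΞdiff _).hasFDerivAt
    have hcomp := hΞd.comp_hasDerivAt s hγ
    have htotal := hcomp.sub (hlog.const_mul (ξ * ω₁ / δ))
    have hΥe : (fun s' => Υ s' φ) =
        fun s' => Ξ (M s' * Real.cos (W s' φ), M s' * Real.sin (W s' φ))
          - (ξ * ω₁ / δ) * Real.log (1 - s') := funext fun s' => hΥ s' φ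
    rw [hΥe]
    refine HasDerivAt.congr_deriv htotal ?_
    ring
  constructor
  · exact fun s hs φ => (key s hs φ).differentiableAt
  -- part 2
  intro η hη
  -- bound on the operator norm of the differential on the unit ball
  obtain ⟨K, hK⟩ := (isCompact_closedBall (0:ℝ×ℝ) 1).exists_bound_of_continuousOn
    (hΞ.continuous_fderiv one_ne_zero).continuousOn
  set K₀ : ℝ := |K| + 1 with hK₀def
  have hK₀pos : (0:ℝ) < K₀ := by positivity
  have hK₀ : ∀ p ∈ Metric.closedBall (0:ℝ×ℝ) 1, ‖fderiv ℝ Ξ p‖ ≤ K₀ := by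
    intro p hp
    calc ‖fderiv ℝ Ξ p‖ ≤ K := hK p hp
    _ ≤ |K| := le_abs_self K
    _ ≤ K₀ := by rw [hK₀def]; linarith
  -- choose ε from uniform smallness
  have hη2 : (0:ℝ) < η / (2 * (ξ * ω₂ / δ + 1)) := by positivity
  obtain ⟨ε, hε, hεball⟩ := Hunif _ hη2
  set t : ℝ := min ε (min (η * δ / (2 * K₀)) 1) with htdef
  have ht : 0 < t := by
    apply lt_min hε
    apply lt_min (by positivity) one_pos
  have ht1 : t ≤ 1 := le_trans (min_le_right _ _) (min_le_right _ _)
  have htε : t ≤ ε := min_le_left _ _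
  have htK : t ≤ η * δ / (2 * K₀) := le_trans (min_le_right _ _) (min_le_left _ _)
  have ht2 : (0:ℝ) < t/2 := by linarith
  refine ⟨1 - (t/2)^δ, ⟨?_, ?_⟩, ?_⟩
  · have : (t/2)^δ < 1 := Real.rpow_lt_one (le_of_lt ht2) (by linarith) hδ
    linarith
  · have : (0:ℝ) < (t/2)^δ := Real.rpow_pos_of_pos ht2 δ
    linarith
  intro s hs φ
  obtain ⟨hsl, hs1⟩ := hs
  have hs0 : 0 < s := by
    have : (t/2)^δ < 1 := Real.rpow_lt_one (le_of_lt ht2) (by linarith) hδ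
    linarith
  have h1s : (0:ℝ) < 1 - s := by linarith
  have h1sne : (1-s) ≠ 0 := ne_of_gt h1s
  rw [(key s ⟨hs0, hs1⟩ φ).deriv]
  set a : ℝ := (1-s)^(1/δ) with hadef
  have ha0 : 0 < a := Real.rpow_pos_of_pos h1s _
  have halt : a < t/2 := by
    have h1 : (1-s) < (t/2)^δ := by linarith
    have h2 : (1-s)^(1/δ) < ((t/2)^δ)^(1/δ) :=
      Real.rpow_lt_rpow (le_of_lt h1s) h1 hδ'
    have h3 : ((t/2)^δ)^(1/δ) = t/2 := by
      rw [← Real.rpow_mul (le_of_lt ht2)]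
      rw [show δ * (1/δ) = 1 by field_simp]
      exact Real.rpow_one _
    rw [hadef]; rw [h3] at h2; exact h2
  have hMs : M s = 1 - a := by rw [hM s, hadef]
  have ht12 : t/2 ≤ 1/2 := by linarith
  have hMs0 : 0 ≤ M s := by rw [hMs]; linarith
  have hMs1 : M s ≤ 1 := by rw [hMs]; linarith
  have hMsε : 1 - ε ≤ M s := by rw [hMs]; linarith
  set L := fderiv ℝ Ξ (M s * Real.cos (W s φ), M s * Real.sin (W s φ)) with hLdef
  -- rewrite the main expression
  have hstep1 : ∀ x : ℝ, (1 - s) * (x + ξ * ω₁ / δ * (1-s)⁻¹) - ξ * ω₁ / δ = (1 - s) * x := by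
    intro x
    field_simp
    ring
  rw [hstep1 _]
  -- the rpow identity
  have hr : a = (1-s)^(1/δ-1) * (1-s) := by
    rw [Real.rpow_sub h1s, Real.rpow_one, div_mul_cancel₀ _ h1sne, hadef]
  -- decompose the vector
  have hvec : (1 - s) • ((1/δ * (1-s)^(1/δ-1) * Real.cos (W s φ)
          + M s * (-Real.sin (W s φ) * (ξ * ω₂ / δ * -(1-s)⁻¹)),
       1/δ * (1-s)^(1/δ-1) * Real.sin (W s φ)
          + M s * (Real.cos (W s φ) * (ξ * ω₂ / δ * -(1-s)⁻¹))) : ℝ × ℝ)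
      = (a/δ) • ((Real.cos (W s φ), Real.sin (W s φ)) : ℝ × ℝ)
        + (ξ * ω₂ / δ) • ((M s * Real.sin (W s φ), -(M s * Real.cos (W s φ))) : ℝ × ℝ) := by
    simp only [Prod.smul_mk, Prod.mk_add_mk, Prod.mk.injEq, smul_eq_mul]
    constructor
    · rw [hr]; field_simp
    · rw [hr]; field_simp
  have hsplit : (1 - s) * L
      (1/δ * (1-s)^(1/δ-1) * Real.cos (W s φ)
          + M s * (-Real.sin (W s φ) * (ξ * ω₂ / δ * -(1-s)⁻¹)),
       1/δ * (1-s)^(1/δ-1) * Real.sin (W s φ)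
          + M s * (Real.cos (W s φ) * (ξ * ω₂ / δ * -(1-s)⁻¹)))
      = (a/δ) * L (Real.cos (W s φ), Real.sin (W s φ))
        + (ξ * ω₂ / δ) * L (M s * Real.sin (W s φ), -(M s * Real.cos (W s φ))) := by
    rw [← smul_eq_mul, ← L.map_smul, hvec, map_add, L.map_smul, L.map_smul,
      smul_eq_mul, smul_eq_mul]
  rw [hsplit]
  -- bounds
  have hmem : (M s * Real.cos (W s φ), M s * Real.sin (W s φ)) ∈ Metric.closedBall (0:ℝ×ℝ) 1 := by
    rw [Metric.mem_closedBall, dist_zero_right, Prod.norm_def]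
    simp only [Real.norm_eq_abs, abs_mul]
    apply max_le
    · calc |M s| * |Real.cos (W s φ)| ≤ 1 * 1 :=
            mul_le_mul (by rwa [abs_of_nonneg hMs0]) (Real.abs_cos_le_one _)
              (abs_nonneg _) zero_le_one
      _ = 1 := by ring
    · calc |M s| * |Real.sin (W s φ)| ≤ 1 * 1 :=
            mul_le_mul (by rwa [abs_of_nonneg hMs0]) (Real.abs_sin_le_one _)
              (abs_nonneg _) zero_le_one
      _ = 1 := by ring
  have hLnorm : ‖L‖ ≤ K₀ := hK₀ _ hmem
  have hLe₁ : |L (Real.cos (W s φ), Real.sin (W s φ))| ≤ K₀ := by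
    rw [← Real.norm_eq_abs]
    calc ‖L (Real.cos (W s φ), Real.sin (W s φ))‖
        ≤ ‖L‖ * ‖((Real.cos (W s φ), Real.sin (W s φ)) : ℝ × ℝ)‖ := L.le_opNorm _
      _ ≤ K₀ * 1 := by
          apply mul_le_mul hLnorm ?_ (norm_nonneg _) (le_of_lt hK₀pos)
          rw [Prod.norm_def]
          simp only [Real.norm_eq_abs]
          exact max_le (Real.abs_cos_le_one _) (Real.abs_sin_le_one _)
      _ = K₀ := by ring
  have hLe₂ : |L (M s * Real.sin (W s φ), -(M s * Real.cos (W s φ)))|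
      < η / (2 * (ξ * ω₂ / δ + 1)) := hεball (M s) hMsε hMs1 (W s φ)
  -- final estimate
  have habs : |(a/δ) * L (Real.cos (W s φ), Real.sin (W s φ))
        + (ξ * ω₂ / δ) * L (M s * Real.sin (W s φ), -(M s * Real.cos (W s φ)))|
      ≤ (a/δ) * |L (Real.cos (W s φ), Real.sin (W s φ))|
        + (ξ * ω₂ / δ) * |L (M s * Real.sin (W s φ), -(M s * Real.cos (W s φ)))| := by
    calc _ ≤ |(a/δ) * L (Real.cos (W s φ), Real.sin (W s φ))|
        + |(ξ * ω₂ / δ) * L (M s * Real.sin (W s φ), -(M s * Real.cos (W s φ)))| := abs_add_le _ _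
    _ = _ := by
        rw [abs_mul, abs_mul, abs_of_pos (by positivity : (0:ℝ) < a/δ),
          abs_of_pos hκ₂]
  apply lt_of_le_of_lt habs
  have hterm1 : (a/δ) * |L (Real.cos (W s φ), Real.sin (W s φ))| ≤ (a/δ) * K₀ :=
    mul_le_mul_of_nonneg_left hLe₁ (by positivity)
  have hterm1' : (a/δ) * K₀ < η / 2 := by
    have h2 : t * (2 * K₀) ≤ η * δ := (le_div_iff₀ (by positivity)).mp htK
    have h3 : a * K₀ < η * δ / 4 := by nlinarith [halt, hK₀pos]
    rw [div_mul_eq_mul_div, div_lt_iff₀ hδ]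
    nlinarith [hδ, hη.le]
  have hterm2 : (ξ * ω₂ / δ) * |L (M s * Real.sin (W s φ), -(M s * Real.cos (W s φ)))|
      < η / 2 := by
    calc (ξ * ω₂ / δ) * |L (M s * Real.sin (W s φ), -(M s * Real.cos (W s φ)))|
        ≤ (ξ * ω₂ / δ) * (η / (2 * (ξ * ω₂ / δ + 1))) :=
          mul_le_mul_of_nonneg_left (le_of_lt hLe₂) (le_of_lt hκ₂)
      _ < η / 2 := by
          rw [mul_div_assoc']
          rw [div_lt_div_iff₀ (by positivity) (by norm_num)]
          nlinarith
  calc (a/δ) * |L (Real.cos (W s φ), Real.sin (W s φ))|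
        + (ξ * ω₂ / δ) * |L (M s * Real.sin (W s φ), -(M s * Real.cos (W s φ)))|
      ≤ (a/δ) * K₀
        + (ξ * ω₂ / δ) * |L (M s * Real.sin (W s φ), -(M s * Real.cos (W s φ)))| := by
        linarith [hterm1]
    _ < η / 2 + η / 2 := by linarith [hterm1', hterm2]
    _ = η := by ring
end

section
/- Let δ, ξ, ω₁, ω₂ > 0 and let Ξ : ℝ² → ℝ be a C¹ map which is constant on the unit circle. Define M(s) = 1 − (1−s)^{1/δ}, W(s,φ) = φ + (ξω₂/δ)ln(1−s), u(s,φ) = M(s)cos W(s,φ), v(s,φ) = M(s)sin W(s,φ), and Υ(s,φ) = Ξ(u(s,φ), v(s,φ)) − (ξω₁/δ)·ln(1−s) for s ∈ [0,1), φ ∈ ℝ. Then ∂Υ/∂φ(s,φ) = −(∂Ξ/∂u)(u,v)·v(s,φ) + (∂Ξ/∂v)(u,v)·u(s,φ), and ∂Υ/∂φ(s,φ) → 0 as s → 1⁻, uniformly in φ ∈ ℝ. -/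
/-- Claim 2 of Proposition 5.5: the partial derivative `∂Υ/∂φ` equals
`−(∂Ξ/∂u)(u,v)·v + (∂Ξ/∂v)(u,v)·u`, and it tends to `0` as `s → 1⁻`,
uniformly in `φ ∈ ℝ`. -/
theorem stmt_10 (δ ξ ω₁ ω₂ : ℝ) (hδ : 0 < δ) (hξ : 0 < ξ) (hω₁ : 0 < ω₁) (hω₂ : 0 < ω₂)
    (Ξ : ℝ × ℝ → ℝ) (hΞ : ContDiff ℝ 1 Ξ)
    (c : ℝ) (hconst : ∀ p : ℝ × ℝ, p.1 ^ 2 + p.2 ^ 2 = 1 → Ξ p = c)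
    (M : ℝ → ℝ) (W : ℝ → ℝ → ℝ) (u v : ℝ → ℝ → ℝ) (Υ : ℝ → ℝ → ℝ)
    (hM : ∀ s : ℝ, M s = 1 - (1 - s) ^ (1 / δ))
    (hW : ∀ s φ : ℝ, W s φ = φ + (ξ * ω₂ / δ) * Real.log (1 - s))
    (hu : ∀ s φ : ℝ, u s φ = M s * Real.cos (W s φ))
    (hv : ∀ s φ : ℝ, v s φ = M s * Real.sin (W s φ))
    (hΥ : ∀ s φ : ℝ, Υ s φ =
      Ξ (u s φ, v s φ) - (ξ * ω₁ / δ) * Real.log (1 - s)) :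
    (∀ s ∈ Set.Ico (0 : ℝ) 1, ∀ φ : ℝ,
      deriv (fun φ' => Υ s φ') φ =
        -(fderiv ℝ Ξ (u s φ, v s φ) (1, 0)) * v s φ
          + (fderiv ℝ Ξ (u s φ, v s φ) (0, 1)) * u s φ) ∧
    (∀ η > (0 : ℝ), ∃ s₀ ∈ Set.Ioo (0 : ℝ) 1, ∀ s ∈ Set.Ioo s₀ 1, ∀ φ : ℝ,
      |deriv (fun φ' => Υ s φ') φ| < η) := by
  have hd : Differentiable ℝ Ξ := hΞ.differentiable one_ne_zero
  -- key derivative formula, valid for every s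
  have key : ∀ s φ : ℝ, deriv (fun φ' => Υ s φ') φ =
      fderiv ℝ Ξ (u s φ, v s φ) (-(v s φ), u s φ) := by
    intro s φ
    have h1 : HasDerivAt (fun φ' : ℝ => W s φ') 1 φ := by
      have := (hasDerivAt_id φ).add_const ((ξ * ω₂ / δ) * Real.log (1 - s))
      simpa [hW] using this
    have hcos : HasDerivAt (fun φ' => M s * Real.cos (W s φ'))
        (M s * (-Real.sin (W s φ) * 1)) φ :=
      ((Real.hasDerivAt_cos (W s φ)).comp φ h1).const_mul (M s)
    have hsin : HasDerivAt (fun φ' => M s * Real.sin (W s φ'))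
        (M s * (Real.cos (W s φ) * 1)) φ :=
      ((Real.hasDerivAt_sin (W s φ)).comp φ h1).const_mul (M s)
    have hcurve : HasDerivAt (fun φ' => ((u s φ', v s φ') : ℝ × ℝ))
        (-(v s φ), u s φ) φ := by
      simp only [hu, hv]
      convert hcos.prodMk hsin using 2 <;> ring
    have hF : HasDerivAt (fun φ' => Ξ (u s φ', v s φ'))
        (fderiv ℝ Ξ (u s φ, v s φ) (-(v s φ), u s φ)) φ :=
      (hd (u s φ, v s φ)).hasFDerivAt.comp_hasDerivAt φ hcurve
    have hΥeq : (fun φ' => Υ s φ')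
        = fun φ' => Ξ (u s φ', v s φ') - (ξ * ω₁ / δ) * Real.log (1 - s) :=
      funext fun φ' => hΥ s φ'
    rw [hΥeq]
    exact (hF.sub_const _).deriv
  have expand : ∀ p : ℝ × ℝ, ∀ a b : ℝ,
      fderiv ℝ Ξ p (-a, b)
        = -(fderiv ℝ Ξ p (1, 0)) * a + (fderiv ℝ Ξ p (0, 1)) * b := by
    intro p a b
    have h : ((-a, b) : ℝ × ℝ) = (-a) • ((1 : ℝ), (0 : ℝ)) + b • ((0 : ℝ), (1 : ℝ)) := by
      simp [Prod.ext_iff]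
    rw [h, (fderiv ℝ Ξ p).map_add, (fderiv ℝ Ξ p).map_smul, (fderiv ℝ Ξ p).map_smul]
    simp only [smul_eq_mul]
    ring
  constructor
  · intro s _ φ
    rw [key s φ, expand]
  · intro η hη
    set g : ℝ × ℝ → ℝ := fun p => fderiv ℝ Ξ p (-p.2, p.1) with hg
    have hgcont : Continuous g := by
      apply (hΞ.continuous_fderiv one_ne_zero).clm_apply
      continuity
    have hgcirc : ∀ θ : ℝ, g (Real.cos θ, Real.sin θ) = 0 := by
      intro θ
      have hcurve : HasDerivAt (fun t => ((Real.cos t, Real.sin t) : ℝ × ℝ))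
          (-Real.sin θ, Real.cos θ) θ :=
        (Real.hasDerivAt_cos θ).prodMk (Real.hasDerivAt_sin θ)
      have hF : HasDerivAt (fun t => Ξ (Real.cos t, Real.sin t))
          (fderiv ℝ Ξ (Real.cos θ, Real.sin θ) (-Real.sin θ, Real.cos θ)) θ :=
        (hd _).hasFDerivAt.comp_hasDerivAt θ hcurve
      have hconst' : (fun t => Ξ (Real.cos t, Real.sin t)) = fun _ => c :=
        funext fun t => hconst _ (by simp [Real.cos_sq_add_sin_sq])
      rw [hconst'] at hF
      have := hF.unique (hasDerivAt_const θ c)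
      simpa [hg] using this
    have hK : IsCompact (Metric.closedBall (0 : ℝ × ℝ) 2) := isCompact_closedBall _ _
    have hUC : UniformContinuousOn g (Metric.closedBall (0 : ℝ × ℝ) 2) :=
      hK.uniformContinuousOn_of_continuous hgcont.continuousOn
    obtain ⟨ε, hε, hεsp⟩ := Metric.uniformContinuousOn_iff.mp hUC η hη
    have hmin : 0 < min ε 1 := lt_min hε one_pos
    set m := min ε 1 / 2 with hm
    have hm0 : 0 < m := by rw [hm]; linarith
    have hm1 : m < 1 := by have := min_le_right ε 1; rw [hm]; linarith
    have hmε : m ≤ ε := by have := min_le_left ε 1; rw [hm]; linarith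
    have hmδ1 : m ^ δ < 1 := Real.rpow_lt_one hm0.le hm1 hδ
    have hmδ0 : 0 < m ^ δ := Real.rpow_pos_of_pos hm0 δ
    refine ⟨1 - m ^ δ, ⟨by linarith, by linarith⟩, ?_⟩
    intro s hs φ
    have h1s : 0 < 1 - s := by linarith [hs.2]
    have hlt : 1 - s < m ^ δ := by linarith [hs.1]
    set r := (1 - s) ^ (1 / δ) with hr
    have hr0 : 0 < r := Real.rpow_pos_of_pos h1s _
    have hrm : r < m := by
      have h := Real.rpow_lt_rpow h1s.le hlt (by positivity : (0 : ℝ) < 1 / δ)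
      have heq : (m ^ δ) ^ (1 / δ) = m := by
        rw [← Real.rpow_mul hm0.le, show δ * (1 / δ) = 1 by field_simp, Real.rpow_one]
      rw [heq] at h
      exact h
    have hMeq : M s = 1 - r := hM s
    have hMb0 : 0 < M s := by rw [hMeq]; linarith
    have hMb1 : M s ≤ 1 := by rw [hMeq]; linarith
    have hxK : ((u s φ, v s φ) : ℝ × ℝ) ∈ Metric.closedBall (0 : ℝ × ℝ) 2 := by
      rw [Metric.mem_closedBall, Prod.dist_eq]
      simp only [Prod.fst_zero, Prod.snd_zero, Real.dist_eq, sub_zero, hu, hv, abs_mul]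
      apply max_le <;>
        nlinarith [Real.abs_cos_le_one (W s φ), Real.abs_sin_le_one (W s φ),
          abs_of_pos hMb0, abs_nonneg (Real.cos (W s φ)), abs_nonneg (Real.sin (W s φ))]
    have hyK : ((Real.cos (W s φ), Real.sin (W s φ)) : ℝ × ℝ)
        ∈ Metric.closedBall (0 : ℝ × ℝ) 2 := by
      rw [Metric.mem_closedBall, Prod.dist_eq]
      simp only [Prod.fst_zero, Prod.snd_zero, Real.dist_eq, sub_zero]
      apply max_le <;>
        linarith [Real.abs_cos_le_one (W s φ), Real.abs_sin_le_one (W s φ)]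
    have hdist : dist ((u s φ, v s φ) : ℝ × ℝ)
        (Real.cos (W s φ), Real.sin (W s φ)) < ε := by
      have habs : |M s - 1| = r := by
        rw [show M s - 1 = -r by rw [hMeq]; ring, abs_neg, abs_of_pos hr0]
      have hbound : ∀ t : ℝ, |t| ≤ 1 → |M s * t - t| < ε := by
        intro t ht
        rw [show M s * t - t = (M s - 1) * t by ring, abs_mul, habs]
        nlinarith [abs_nonneg t]
      rw [Prod.dist_eq]
      apply max_lt
      · rw [Real.dist_eq, hu]; exact hbound _ (Real.abs_cos_le_one _)
      · rw [Real.dist_eq, hv]; exact hbound _ (Real.abs_sin_le_one _)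
    have hval : fderiv ℝ Ξ (u s φ, v s φ) (-(v s φ), u s φ) = g (u s φ, v s φ) := rfl
    have h := hεsp _ hxK _ hyK hdist
    rw [hgcirc (W s φ)] at h
    rw [key s φ, hval]
    simpa [Real.dist_eq] using h
end

section
/- Let δ, ξ, ω₁, ω₂ > 0 and let Ξ : ℝ² → ℝ be a C¹ map which is constant on the unit circle. Define Υ(s,φ) = Ξ(M(s)cos W(s,φ), M(s)sin W(s,φ)) − (ξω₁/δ)·ln(1−s) with M(s) = 1 − (1−s)^{1/δ} and W(s,φ) = φ + (ξω₂/δ)ln(1−s), and h(s,φ) = 1 − exp(−(δ/(ξω₁))·Υ(s,φ)) for s ∈ [0,1), φ ∈ ℝ. Then there exists s₀ ∈ (0,1) such that the map η(φ₁, s, φ₂) = (φ₂, h(s,φ₂), φ₁) is injective on ℝ × (s₀,1) × ℝ. -/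
open Real Set
set_option maxHeartbeats 1000000

lemma tangent_zero (Ξ : ℝ × ℝ → ℝ) (hΞ : ContDiff ℝ 1 Ξ)
    (c : ℝ) (hconst : ∀ p : ℝ × ℝ, p.1 ^ 2 + p.2 ^ 2 = 1 → Ξ p = c) (θ : ℝ) :
    fderiv ℝ Ξ (Real.cos θ, Real.sin θ) (-Real.sin θ, Real.cos θ) = 0 := by
  have hγ : HasDerivAt (fun t : ℝ => (Real.cos t, Real.sin t))
      (-Real.sin θ, Real.cos θ) θ := (Real.hasDerivAt_cos θ).prodMk (Real.hasDerivAt_sin θ)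
  have hD : HasFDerivAt Ξ (fderiv ℝ Ξ (Real.cos θ, Real.sin θ)) (Real.cos θ, Real.sin θ) :=
    (hΞ.differentiable one_ne_zero _).hasFDerivAt
  have hg : HasDerivAt (fun t : ℝ => Ξ (Real.cos t, Real.sin t))
      (fderiv ℝ Ξ (Real.cos θ, Real.sin θ) (-Real.sin θ, Real.cos θ)) θ :=
    hD.comp_hasDerivAt θ hγ
  have heq : (fun t : ℝ => Ξ (Real.cos t, Real.sin t)) = fun _ => c := by
    funext t; exact hconst _ (by simpa using Real.cos_sq_add_sin_sq t)
  rw [heq] at hg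
  exact hg.unique (hasDerivAt_const θ c)

lemma unif_small (Ξ : ℝ × ℝ → ℝ) (hΞ : ContDiff ℝ 1 Ξ) (ε : ℝ) (hε : 0 < ε) :
    ∃ ρ : ℝ, 0 < ρ ∧ ρ < 1 ∧ ∀ r θ : ℝ, ρ ≤ r → r ≤ 1 →
      ‖fderiv ℝ Ξ (r * Real.cos θ, r * Real.sin θ) - fderiv ℝ Ξ (Real.cos θ, Real.sin θ)‖ < ε := by
  have hcont : ContinuousOn (fderiv ℝ Ξ) (Metric.closedBall (0 : ℝ × ℝ) 2) :=
    (hΞ.continuous_fderiv one_ne_zero).continuousOn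
  have huc := (isCompact_closedBall (0 : ℝ × ℝ) 2).uniformContinuousOn_of_continuous hcont
  rw [Metric.uniformContinuousOn_iff] at huc
  obtain ⟨d, hd, hduc⟩ := huc ε hε
  refine ⟨max (1/2) (1 - d/2), lt_of_lt_of_le one_half_pos (le_max_left _ _),
    max_lt (by norm_num) (by linarith), ?_⟩
  intro r θ hr hr1
  have hρpos : (0:ℝ) < max (1/2) (1 - d/2) := lt_of_lt_of_le one_half_pos (le_max_left _ _)
  have hr0 : 0 < r := lt_of_lt_of_le hρpos hr
  have hc1 : |Real.cos θ| ≤ 1 := Real.abs_cos_le_one θ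
  have hs1 : |Real.sin θ| ≤ 1 := Real.abs_sin_le_one θ
  have hx : (r * Real.cos θ, r * Real.sin θ) ∈ Metric.closedBall (0 : ℝ × ℝ) 2 := by
    rw [Metric.mem_closedBall, dist_zero_right, Prod.norm_def]
    apply max_le <;> · simp only [Real.norm_eq_abs, abs_mul, abs_of_nonneg hr0.le]
                       nlinarith [abs_nonneg (Real.cos θ), abs_nonneg (Real.sin θ)]
  have hy : ((Real.cos θ : ℝ), Real.sin θ) ∈ Metric.closedBall (0 : ℝ × ℝ) 2 := by
    rw [Metric.mem_closedBall, dist_zero_right, Prod.norm_def]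
    apply max_le <;> simp only [Real.norm_eq_abs] <;> linarith
  have hdist : dist ((r * Real.cos θ, r * Real.sin θ) : ℝ × ℝ) (Real.cos θ, Real.sin θ) < d := by
    rw [Prod.dist_eq]
    have h1 : dist (r * Real.cos θ) (Real.cos θ) ≤ 1 - r := by
      rw [Real.dist_eq]
      have : r * Real.cos θ - Real.cos θ = (r - 1) * Real.cos θ := by ring
      rw [this, abs_mul, abs_of_nonpos (by linarith : r - 1 ≤ 0)]
      nlinarith
    have h2 : dist (r * Real.sin θ) (Real.sin θ) ≤ 1 - r := by
      rw [Real.dist_eq]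
      have : r * Real.sin θ - Real.sin θ = (r - 1) * Real.sin θ := by ring
      rw [this, abs_mul, abs_of_nonpos (by linarith : r - 1 ≤ 0)]
      nlinarith
    have hrd : 1 - r < d := by
      have := le_trans (le_max_right (1/2 : ℝ) (1 - d/2)) hr
      linarith
    exact max_lt (lt_of_le_of_lt h1 hrd) (lt_of_le_of_lt h2 hrd)
  have := hduc _ hx _ hy hdist
  rwa [dist_eq_norm] at this

/-- Claim 3 of Proposition 5.5: with `h(s,φ) = 1 − exp(−(δ/(ξω₁))Υ(s,φ))`,
there is `s₀ ∈ (0,1)` such that the map `η(φ₁, s, φ₂) = (φ₂, h(s,φ₂), φ₁)` is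
injective on `ℝ × (s₀,1) × ℝ`. -/
theorem stmt_12 (δ ξ ω₁ ω₂ : ℝ) (hδ : 0 < δ) (hξ : 0 < ξ) (hω₁ : 0 < ω₁) (hω₂ : 0 < ω₂)
    (Ξ : ℝ × ℝ → ℝ) (hΞ : ContDiff ℝ 1 Ξ)
    (c : ℝ) (hconst : ∀ p : ℝ × ℝ, p.1 ^ 2 + p.2 ^ 2 = 1 → Ξ p = c)
    (M : ℝ → ℝ) (W : ℝ → ℝ → ℝ) (Υ : ℝ → ℝ → ℝ) (hfun : ℝ → ℝ → ℝ)
    (hM : ∀ s : ℝ, M s = 1 - (1 - s) ^ (1 / δ))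
    (hW : ∀ s φ : ℝ, W s φ = φ + (ξ * ω₂ / δ) * Real.log (1 - s))
    (hΥ : ∀ s φ : ℝ, Υ s φ =
      Ξ (M s * Real.cos (W s φ), M s * Real.sin (W s φ))
        - (ξ * ω₁ / δ) * Real.log (1 - s))
    (hh : ∀ s φ : ℝ, hfun s φ = 1 - Real.exp (-(δ / (ξ * ω₁)) * Υ s φ))
    (η : ℝ × ℝ × ℝ → ℝ × ℝ × ℝ)
    (hη : ∀ φ₁ s φ₂ : ℝ, η (φ₁, s, φ₂) = (φ₂, hfun s φ₂, φ₁)) :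
    ∃ s₀ ∈ Set.Ioo (0 : ℝ) 1,
      Set.InjOn η ((Set.univ : Set ℝ) ×ˢ (Set.Ioo s₀ 1 ×ˢ (Set.univ : Set ℝ))) := by
  obtain ⟨L, hL⟩ : ∃ L, ∀ x ∈ Metric.closedBall (0 : ℝ × ℝ) 2, ‖fderiv ℝ Ξ x‖ ≤ L :=
    (isCompact_closedBall _ _).exists_bound_of_continuousOn
      (hΞ.continuous_fderiv one_ne_zero).continuousOn
  set C : ℝ := max L 1 with hCdef
  have hC : 0 < C := lt_of_lt_of_le one_pos (le_max_right _ _)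
  have hLC : L ≤ C := le_max_left _ _
  have hε : 0 < ω₁ / (4 * ω₂) := by positivity
  obtain ⟨ρ, hρ0, hρ1, hρ⟩ := unif_small Ξ hΞ _ hε
  set t : ℝ := min (ξ * ω₁ / (4 * C)) (1 - ρ) with htdef
  have ht0 : 0 < t := lt_min (by positivity) (by linarith)
  have ht1 : t ≤ 1 - ρ := min_le_right _ _
  have htC : t ≤ ξ * ω₁ / (4 * C) := min_le_left _ _
  have htδ : 0 < t ^ δ := Real.rpow_pos_of_pos ht0 δ
  set s₀ : ℝ := max (1 - t ^ δ) (1 / 2) with hs₀def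
  have hs₀0 : 0 < s₀ := lt_of_lt_of_le one_half_pos (le_max_right _ _)
  have hs₀1 : s₀ < 1 := max_lt (by linarith) (by norm_num)
  have hs₀t : 1 - t ^ δ ≤ s₀ := le_max_left _ _
  refine ⟨s₀, ⟨hs₀0, hs₀1⟩, ?_⟩
  -- key estimates for s ∈ (s₀, 1)
  have key : ∀ φ : ℝ, StrictMonoOn (fun s => Υ s φ) (Set.Ioo s₀ 1) := by
    intro φ
    set F : ℝ → ℝ := fun s =>
      Ξ ((1 - (1 - s) ^ (1 / δ)) * Real.cos (φ + (ξ * ω₂ / δ) * Real.log (1 - s)),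
         (1 - (1 - s) ^ (1 / δ)) * Real.sin (φ + (ξ * ω₂ / δ) * Real.log (1 - s)))
        - (ξ * ω₁ / δ) * Real.log (1 - s) with hFdef
    have hrepr : (fun s => Υ s φ) = F := by
      funext s; rw [hΥ, hM, hW]
    rw [hrepr]
    have hder : ∀ s ∈ Set.Ioo s₀ 1, ∃ d, HasDerivAt F d s ∧ 0 < d := by
      intro s hs
      obtain ⟨hs₀s, hs1⟩ := hs
      have hu : 0 < 1 - s := by linarith
      set ms : ℝ := 1 - (1 - s) ^ (1 / δ) with hmsdef
      set ws : ℝ := φ + (ξ * ω₂ / δ) * Real.log (1 - s) with hwsdef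
      -- (1-s)^(1/δ) ≤ t
      have hust : (1 - s) ^ (1 / δ) ≤ t := by
        have h1 : (1 - s : ℝ) ≤ t ^ δ := by linarith
        have h2 : ((1 - s) : ℝ) ^ (1 / δ) ≤ (t ^ δ) ^ (1 / δ) :=
          Real.rpow_le_rpow hu.le h1 (by positivity)
        rwa [← Real.rpow_mul ht0.le, mul_one_div_cancel hδ.ne', Real.rpow_one] at h2
      -- bounds on ms
      have hus0 : 0 < (1 - s) ^ (1 / δ) := Real.rpow_pos_of_pos hu (1 / δ)
      have hms_lb : ρ ≤ ms := by rw [hmsdef]; linarith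
      have hms_ub : ms ≤ 1 := by rw [hmsdef]; linarith
      have hms_pos : 0 < ms := lt_of_lt_of_le hρ0 hms_lb
      -- derivative building blocks
      have h1s : HasDerivAt (fun x : ℝ => 1 - x) (-1 : ℝ) s := by
        simpa using (hasDerivAt_id s).const_sub 1
      have hr : HasDerivAt (fun x : ℝ => (1 - x) ^ (1 / δ))
          (1 / δ * (1 - s) ^ (1 / δ - 1) * (-1)) s :=
        (Real.hasDerivAt_rpow_const (Or.inl hu.ne')).comp s h1s
      have hm : HasDerivAt (fun x : ℝ => 1 - (1 - x) ^ (1 / δ))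
          (1 / δ * (1 - s) ^ (1 / δ - 1)) s := by
        have := hr.const_sub 1
        simpa using this
      have hlog : HasDerivAt (fun x : ℝ => Real.log (1 - x)) ((1 - s)⁻¹ * (-1)) s :=
        (Real.hasDerivAt_log hu.ne').comp s h1s
      have hw : HasDerivAt (fun x : ℝ => φ + ξ * ω₂ / δ * Real.log (1 - x))
          (ξ * ω₂ / δ * ((1 - s)⁻¹ * (-1))) s :=
        (hlog.const_mul (ξ * ω₂ / δ)).const_add φ
      have hcos : HasDerivAt (fun x : ℝ => Real.cos (φ + ξ * ω₂ / δ * Real.log (1 - x)))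
          (-Real.sin ws * (ξ * ω₂ / δ * ((1 - s)⁻¹ * (-1)))) s :=
        (Real.hasDerivAt_cos ws).comp (h₂ := Real.cos) s hw
      have hsin : HasDerivAt (fun x : ℝ => Real.sin (φ + ξ * ω₂ / δ * Real.log (1 - x)))
          (Real.cos ws * (ξ * ω₂ / δ * ((1 - s)⁻¹ * (-1)))) s :=
        (Real.hasDerivAt_sin ws).comp (h₂ := Real.sin) s hw
      set m' : ℝ := 1 / δ * (1 - s) ^ (1 / δ - 1) with hm'def
      set w' : ℝ := ξ * ω₂ / δ * ((1 - s)⁻¹ * (-1)) with hw'def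
      have hP : HasDerivAt (fun x : ℝ =>
          (((1 - (1 - x) ^ (1 / δ)) * Real.cos (φ + ξ * ω₂ / δ * Real.log (1 - x)),
            (1 - (1 - x) ^ (1 / δ)) * Real.sin (φ + ξ * ω₂ / δ * Real.log (1 - x))) : ℝ × ℝ))
          (m' * Real.cos ws + ms * (-Real.sin ws * w'),
           m' * Real.sin ws + ms * (Real.cos ws * w')) s :=
        (hm.mul hcos).prodMk (hm.mul hsin)
      set D := fderiv ℝ Ξ (ms * Real.cos ws, ms * Real.sin ws) with hDdef
      have hfd : HasFDerivAt Ξ D (ms * Real.cos ws, ms * Real.sin ws) :=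
        (hΞ.differentiable one_ne_zero _).hasFDerivAt
      have hcomp : HasDerivAt (fun x : ℝ =>
          Ξ ((1 - (1 - x) ^ (1 / δ)) * Real.cos (φ + ξ * ω₂ / δ * Real.log (1 - x)),
             (1 - (1 - x) ^ (1 / δ)) * Real.sin (φ + ξ * ω₂ / δ * Real.log (1 - x))))
          (D (m' * Real.cos ws + ms * (-Real.sin ws * w'),
              m' * Real.sin ws + ms * (Real.cos ws * w'))) s :=
        hfd.comp_hasDerivAt s hP
      have hF : HasDerivAt F
          (D (m' * Real.cos ws + ms * (-Real.sin ws * w'),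
              m' * Real.sin ws + ms * (Real.cos ws * w'))
            - ξ * ω₁ / δ * ((1 - s)⁻¹ * (-1))) s := by
        rw [hFdef]
        exact hcomp.sub (hlog.const_mul (ξ * ω₁ / δ))
      refine ⟨_, hF, ?_⟩
      -- now the positivity estimate
      have hsplit : ((m' * Real.cos ws + ms * (-Real.sin ws * w'),
          m' * Real.sin ws + ms * (Real.cos ws * w')) : ℝ × ℝ)
          = m' • ((Real.cos ws, Real.sin ws) : ℝ × ℝ)
            + (ms * w') • ((-Real.sin ws, Real.cos ws) : ℝ × ℝ) := by
        simp [Prod.ext_iff, Prod.smul_def, smul_eq_mul]; constructor <;> ring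
      have hDval : D (m' * Real.cos ws + ms * (-Real.sin ws * w'),
          m' * Real.sin ws + ms * (Real.cos ws * w'))
          = m' * D (Real.cos ws, Real.sin ws)
            + (ms * w') * D (-Real.sin ws, Real.cos ws) := by
        rw [hsplit, map_add, map_smul, map_smul, smul_eq_mul, smul_eq_mul]
      -- bound ‖D‖ ≤ L
      have hDnorm : ‖D‖ ≤ L := by
        apply hL
        rw [Metric.mem_closedBall, dist_zero_right, Prod.norm_def]
        apply max_le <;>
          · simp only [Real.norm_eq_abs, abs_mul, abs_of_pos hms_pos]
            nlinarith [Real.abs_cos_le_one ws, Real.abs_sin_le_one ws,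
              abs_nonneg (Real.cos ws), abs_nonneg (Real.sin ws)]
      have hnu : ‖((Real.cos ws, Real.sin ws) : ℝ × ℝ)‖ ≤ 1 := by
        rw [Prod.norm_def]
        apply max_le <;> simp only [Real.norm_eq_abs] <;>
          first | exact Real.abs_cos_le_one ws | exact Real.abs_sin_le_one ws
      have hnv : ‖((-Real.sin ws, Real.cos ws) : ℝ × ℝ)‖ ≤ 1 := by
        rw [Prod.norm_def]
        apply max_le <;> simp only [Real.norm_eq_abs, abs_neg] <;>
          first | exact Real.abs_cos_le_one ws | exact Real.abs_sin_le_one ws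
      have hDu : |D (Real.cos ws, Real.sin ws)| ≤ L := by
        calc |D (Real.cos ws, Real.sin ws)| ≤ ‖D‖ * ‖((Real.cos ws, Real.sin ws) : ℝ × ℝ)‖ :=
              D.le_opNorm _
          _ ≤ L * 1 := by
              apply mul_le_mul hDnorm hnu (norm_nonneg _) (le_trans (norm_nonneg _) hDnorm)
          _ = L := mul_one L
      have hDv : |D (-Real.sin ws, Real.cos ws)| ≤ ω₁ / (4 * ω₂) := by
        have hzero : fderiv ℝ Ξ (Real.cos ws, Real.sin ws) (-Real.sin ws, Real.cos ws) = 0 :=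
          tangent_zero Ξ hΞ c hconst ws
        have : D (-Real.sin ws, Real.cos ws)
            = (D - fderiv ℝ Ξ (Real.cos ws, Real.sin ws)) (-Real.sin ws, Real.cos ws) := by
          rw [ContinuousLinearMap.sub_apply, hzero, sub_zero]
        rw [this]
        calc |(D - fderiv ℝ Ξ (Real.cos ws, Real.sin ws)) (-Real.sin ws, Real.cos ws)|
            ≤ ‖D - fderiv ℝ Ξ (Real.cos ws, Real.sin ws)‖ * ‖((-Real.sin ws, Real.cos ws) : ℝ × ℝ)‖ :=
              (D - fderiv ℝ Ξ (Real.cos ws, Real.sin ws)).le_opNorm _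
          _ ≤ ω₁ / (4 * ω₂) * 1 := by
              apply mul_le_mul (le_of_lt (hρ ms ws hms_lb hms_ub)) hnv (norm_nonneg _) (le_of_lt hε)
          _ = ω₁ / (4 * ω₂) := mul_one _
      -- rewrite m' in terms of (1-s)^(1/δ) * (1-s)⁻¹
      have hm'eq : m' = 1 / δ * ((1 - s) ^ (1 / δ) * (1 - s)⁻¹) := by
        rw [hm'def, Real.rpow_sub hu, Real.rpow_one]; ring
      have hm'pos : 0 < m' := by
        rw [hm'eq]; positivity
      have hLnn : 0 ≤ L := le_trans (norm_nonneg _) hDnorm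
      have huinv : 0 < (1 - s)⁻¹ := inv_pos.mpr hu
      -- |first term| ≤ ξω₁/(4δ) * (1-s)⁻¹
      have hterm1 : |m' * D (Real.cos ws, Real.sin ws)| ≤ ξ * ω₁ / (4 * δ) * (1 - s)⁻¹ := by
        rw [abs_mul, abs_of_pos hm'pos]
        calc m' * |D (Real.cos ws, Real.sin ws)| ≤ m' * L := by
              exact mul_le_mul_of_nonneg_left hDu hm'pos.le
          _ = L * (1 / δ) * ((1 - s) ^ (1 / δ)) * (1 - s)⁻¹ := by rw [hm'eq]; ring
          _ ≤ C * (1 / δ) * t * (1 - s)⁻¹ := by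
              apply mul_le_mul_of_nonneg_right _ huinv.le
              have h1 : L * (1 / δ) * (1 - s) ^ (1 / δ) ≤ C * (1 / δ) * (1 - s) ^ (1 / δ) := by
                apply mul_le_mul_of_nonneg_right _ hus0.le
                apply mul_le_mul_of_nonneg_right hLC (by positivity)
              have h2 : C * (1 / δ) * (1 - s) ^ (1 / δ) ≤ C * (1 / δ) * t := by
                apply mul_le_mul_of_nonneg_left hust (by positivity)
              linarith
          _ ≤ ξ * ω₁ / (4 * δ) * (1 - s)⁻¹ := by
              apply mul_le_mul_of_nonneg_right _ huinv.le
              rw [div_eq_mul_inv] at htC ⊢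
              have : C * (1 / δ) * t ≤ C * (1 / δ) * (ξ * ω₁ * (4 * C)⁻¹) := by
                apply mul_le_mul_of_nonneg_left htC (by positivity)
              calc C * (1 / δ) * t ≤ C * (1 / δ) * (ξ * ω₁ * (4 * C)⁻¹) := this
                _ = ξ * ω₁ * (4 * δ)⁻¹ := by field_simp
      -- |second term| ≤ ξω₁/(4δ) * (1-s)⁻¹
      have hterm2 : |(ms * w') * D (-Real.sin ws, Real.cos ws)| ≤ ξ * ω₁ / (4 * δ) * (1 - s)⁻¹ := by
        rw [abs_mul]
        have habsw : |ms * w'| ≤ ξ * ω₂ / δ * (1 - s)⁻¹ := by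
          rw [hw'def, abs_mul, abs_of_pos hms_pos]
          have : |ξ * ω₂ / δ * ((1 - s)⁻¹ * (-1))| = ξ * ω₂ / δ * (1 - s)⁻¹ := by
            rw [abs_mul, abs_of_pos (by positivity : (0:ℝ) < ξ * ω₂ / δ)]
            rw [abs_mul, abs_of_pos huinv]
            simp
          rw [this]
          nlinarith [mul_nonneg (sub_nonneg.mpr hms_ub) (mul_pos (div_pos (mul_pos hξ hω₂) hδ) huinv).le]
        calc |ms * w'| * |D (-Real.sin ws, Real.cos ws)|
            ≤ (ξ * ω₂ / δ * (1 - s)⁻¹) * (ω₁ / (4 * ω₂)) := by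
              apply mul_le_mul habsw hDv (abs_nonneg _) (by positivity)
          _ = ξ * ω₁ / (4 * δ) * (1 - s)⁻¹ := by field_simp
      -- combine
      rw [hDval]
      have hmain : ξ * ω₁ / δ * ((1 - s)⁻¹ * (-1)) = -(ξ * ω₁ / δ * (1 - s)⁻¹) := by ring
      have h1 := abs_le.mp hterm1
      have h2 := abs_le.mp hterm2
      have hgap : ξ * ω₁ / (4 * δ) * (1 - s)⁻¹ + ξ * ω₁ / (4 * δ) * (1 - s)⁻¹
          < ξ * ω₁ / δ * (1 - s)⁻¹ := by
        have : 0 < ξ * ω₁ / δ * (1 - s)⁻¹ := by positivity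
        have heq : ξ * ω₁ / (4 * δ) * (1 - s)⁻¹ = (ξ * ω₁ / δ * (1 - s)⁻¹) / 4 := by
          field_simp
        rw [heq]; linarith
      linarith [h1.1, h2.1]
    apply strictMonoOn_of_deriv_pos (convex_Ioo s₀ 1)
    · intro x hx
      exact ((hder x hx).choose_spec.1).continuousAt.continuousWithinAt
    · intro x hx
      rw [interior_Ioo] at hx
      obtain ⟨d, hd, hdpos⟩ := hder x hx
      rw [hd.deriv]; exact hdpos
  -- final assembly
  rintro ⟨a, b, e⟩ hp ⟨a', b', e'⟩ hq hpq
  simp only [Set.mem_prod, Set.mem_univ, true_and, and_true] at hp hq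
  rw [hη, hη] at hpq
  simp only [Prod.mk.injEq] at hpq
  obtain ⟨he, hb, ha⟩ := hpq
  subst he; subst ha
  have hbexp : Real.exp (-(δ / (ξ * ω₁)) * Υ b e) = Real.exp (-(δ / (ξ * ω₁)) * Υ b' e) := by
    rw [hh, hh] at hb; linarith
  have hne : -(δ / (ξ * ω₁)) ≠ 0 := by
    have h0 : 0 < δ / (ξ * ω₁) := by positivity
    exact neg_ne_zero.mpr (ne_of_gt h0)
  have hΥeq : Υ b e = Υ b' e := mul_left_cancel₀ hne (Real.exp_injective hbexp)
  have hbb : b = b' := (key e).injOn hp hq hΥeq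
  rw [hbb]
end

section
/- Let δ, ξ, ω₁, ω₂ > 0 and let Ξ : ℝ² → ℝ be a C¹ map taking the constant value C on the unit circle. Define Υ(s,φ) = Ξ(M(s)cos W(s,φ), M(s)sin W(s,φ)) − (ξω₁/δ)·ln(1−s) with M(s) = 1 − (1−s)^{1/δ}, W(s,φ) = φ + (ξω₂/δ)ln(1−s), and h(s,φ) = 1 − exp(−(δ/(ξω₁))·Υ(s,φ)) for s ∈ [0,1), φ ∈ ℝ. Then, uniformly in φ ∈ ℝ: (i) ∂h/∂s(s,φ) → exp(−δC/(ξω₁)) ≠ 0 as s → 1⁻, and (ii) ∂h/∂φ(s,φ) → 0 as s → 1⁻. -/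
open Real Set



lemma aux_reduce (θ : ℝ) : ∃ θ' ∈ Set.Icc (0:ℝ) (2*π),
    Real.cos θ' = Real.cos θ ∧ Real.sin θ' = Real.sin θ := by
  have h2π : (0:ℝ) < 2*π := by positivity
  refine ⟨θ - ⌊θ/(2*π)⌋ * (2*π), ⟨?_, ?_⟩,
    Real.cos_sub_int_mul_two_pi θ _, Real.sin_sub_int_mul_two_pi θ _⟩
  · have hx1 : (⌊θ/(2*π)⌋ : ℝ) * (2*π) ≤ θ := by
      rw [← le_div_iff₀ h2π]; exact Int.floor_le _
    linarith
  · have hx2 : θ < ((⌊θ/(2*π)⌋ : ℝ) + 1) * (2*π) := by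
      rw [← div_lt_iff₀ h2π]; exact Int.lt_floor_add_one _
    nlinarith

lemma aux_tangent (Ξ : ℝ × ℝ → ℝ) (C : ℝ) (hΞ : ContDiff ℝ 1 Ξ)
    (hconst : ∀ p : ℝ × ℝ, p.1 ^ 2 + p.2 ^ 2 = 1 → Ξ p = C) (θ : ℝ) :
    fderiv ℝ Ξ (Real.cos θ, Real.sin θ) (-Real.sin θ, Real.cos θ) = 0 := by
  have hγ : HasDerivAt (fun t : ℝ => ((Real.cos t, Real.sin t) : ℝ × ℝ))
      (-Real.sin θ, Real.cos θ) θ := (Real.hasDerivAt_cos θ).prodMk (Real.hasDerivAt_sin θ)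
  have hcomp : HasDerivAt (fun t => Ξ (Real.cos t, Real.sin t))
      (fderiv ℝ Ξ (Real.cos θ, Real.sin θ) (-Real.sin θ, Real.cos θ)) θ :=
    ((hΞ.differentiable one_ne_zero) _).hasFDerivAt.comp_hasDerivAt θ hγ
  have hc : (fun t => Ξ (Real.cos t, Real.sin t)) = fun _ => C := by
    funext t; exact hconst _ (by simp [Real.cos_sq_add_sin_sq])
  rw [hc] at hcomp
  exact hcomp.unique (hasDerivAt_const θ C)

lemma aux_UC (f : ℝ × ℝ → ℝ) (c : ℝ) (hf : Continuous f)
    (hf1 : ∀ θ, f (1, θ) = c)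
    (hper : ∀ r θ θ', Real.cos θ' = Real.cos θ → Real.sin θ' = Real.sin θ → f (r, θ') = f (r, θ)) :
    ∀ ε > (0:ℝ), ∃ d > (0:ℝ), ∀ r ∈ Set.Icc (0:ℝ) 1, 1 - r < d → ∀ θ, |f (r, θ) - c| < ε := by
  intro ε hε
  have hK : IsCompact (Set.Icc (0:ℝ) 1 ×ˢ Set.Icc (0:ℝ) (2*π)) :=
    isCompact_Icc.prod isCompact_Icc
  have huc := hK.uniformContinuousOn_of_continuous hf.continuousOn
  rw [Metric.uniformContinuousOn_iff] at huc
  obtain ⟨d, hd, h⟩ := huc ε hε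
  refine ⟨d, hd, fun r hr hrd θ => ?_⟩
  obtain ⟨θ', hθ', hcos, hsin⟩ := aux_reduce θ
  rw [← hper r θ θ' hcos hsin, ← hf1 θ']
  have h1 : ((r, θ') : ℝ × ℝ) ∈ Set.Icc (0:ℝ) 1 ×ˢ Set.Icc (0:ℝ) (2*π) :=
    Set.mk_mem_prod hr hθ'
  have h2 : ((1, θ') : ℝ × ℝ) ∈ Set.Icc (0:ℝ) 1 ×ˢ Set.Icc (0:ℝ) (2*π) :=
    Set.mk_mem_prod ⟨zero_le_one, le_refl 1⟩ hθ'
  have hdist : dist ((r, θ') : ℝ × ℝ) ((1, θ') : ℝ × ℝ) < d := by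
    have hr1 : dist r 1 = 1 - r := by
      rw [Real.dist_eq, abs_sub_comm, abs_of_nonneg (by linarith [hr.2])]
    rw [Prod.dist_eq, hr1, dist_self]
    exact max_lt hrd hd
  have := h _ h1 _ h2 hdist
  rwa [Real.dist_eq] at this

lemma aux_memball (r : ℝ) (hr : r ∈ Set.Icc (0:ℝ) 1) (θ : ℝ) :
    ((r * Real.cos θ, r * Real.sin θ) : ℝ × ℝ) ∈ Metric.closedBall (0 : ℝ × ℝ) 1 := by
  rw [Metric.mem_closedBall, dist_zero_right, Prod.norm_def]
  have h1 : |r * Real.cos θ| ≤ 1 := by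
    rw [abs_mul, abs_of_nonneg hr.1]
    exact mul_le_one₀ hr.2 (abs_nonneg _) (Real.abs_cos_le_one θ)
  have h2 : |r * Real.sin θ| ≤ 1 := by
    rw [abs_mul, abs_of_nonneg hr.1]
    exact mul_le_one₀ hr.2 (abs_nonneg _) (Real.abs_sin_le_one θ)
  simp only [Real.norm_eq_abs]
  exact max_le h1 h2

lemma aux_vecnorm (a b : ℝ) (ha : |a| ≤ 1) (hb : |b| ≤ 1) : ‖((a, b) : ℝ × ℝ)‖ ≤ 1 := by
  rw [Prod.norm_def]; simp only [Real.norm_eq_abs]; exact max_le ha hb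


lemma aux_key (δ ξ ω₁ : ℝ) (hδ : 0 < δ) (hξ : 0 < ξ) (hω₁ : 0 < ω₁)
    (Ξ : ℝ × ℝ → ℝ) (M : ℝ → ℝ) (W : ℝ → ℝ → ℝ) (Υ : ℝ → ℝ → ℝ) (hfun : ℝ → ℝ → ℝ)
    (hΥ : ∀ s φ : ℝ, Υ s φ =
      Ξ (M s * Real.cos (W s φ), M s * Real.sin (W s φ))
        - (ξ * ω₁ / δ) * Real.log (1 - s))
    (hh : ∀ s φ : ℝ, hfun s φ = 1 - Real.exp (-(δ / (ξ * ω₁)) * Υ s φ))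
    (s : ℝ) (hs : s < 1) (φ : ℝ) :
    hfun s φ = 1 - (1 - s) *
      Real.exp (-(δ / (ξ * ω₁) * Ξ (M s * Real.cos (W s φ), M s * Real.sin (W s φ)))) := by
  have h1 : (0:ℝ) < 1 - s := by linarith
  rw [hh, hΥ]
  set q := Ξ (M s * Real.cos (W s φ), M s * Real.sin (W s φ)) with hq
  have h2 : -(δ / (ξ * ω₁)) * (q - ξ * ω₁ / δ * Real.log (1 - s))
      = -(δ / (ξ * ω₁) * q) + Real.log (1 - s) := by
    field_simp
    ring
  rw [h2, Real.exp_add, Real.exp_log h1]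
  ring


lemma aux_hasDerivS (δ ξ ω₁ ω₂ : ℝ) (hδ : 0 < δ) (hξ : 0 < ξ) (hω₁ : 0 < ω₁)
    (Ξ : ℝ × ℝ → ℝ) (hΞ : ContDiff ℝ 1 Ξ) (M : ℝ → ℝ) (W : ℝ → ℝ → ℝ)
    (hM : ∀ s : ℝ, M s = 1 - (1 - s) ^ (1 / δ))
    (hW : ∀ s φ : ℝ, W s φ = φ + (ξ * ω₂ / δ) * Real.log (1 - s))
    (s : ℝ) (hs : s ∈ Set.Ioo (0:ℝ) 1) (φ : ℝ) :
    HasDerivAt (fun s' => 1 - (1 - s') *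
        Real.exp (-(δ / (ξ * ω₁) * Ξ (M s' * Real.cos (W s' φ), M s' * Real.sin (W s' φ)))))
      (Real.exp (-(δ / (ξ * ω₁) * Ξ (M s * Real.cos (W s φ), M s * Real.sin (W s φ)))) *
        (1 + δ / (ξ * ω₁) * ((1/δ) * (1-s) ^ (1/δ) *
            fderiv ℝ Ξ (M s * Real.cos (W s φ), M s * Real.sin (W s φ))
              (Real.cos (W s φ), Real.sin (W s φ))
          - ξ * ω₂ / δ * M s *
            fderiv ℝ Ξ (M s * Real.cos (W s φ), M s * Real.sin (W s φ))
              (-Real.sin (W s φ), Real.cos (W s φ))))) s := by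
  have hs1 : (0:ℝ) < 1 - s := by linarith [hs.2]
  set k := δ / (ξ * ω₁) with hk
  set θ := W s φ with hθ
  set r := M s with hr
  set m' : ℝ := (1/δ) * (1-s) ^ (1/δ - 1) with hm'
  set w' : ℝ := (ξ * ω₂ / δ) * ((1-s)⁻¹ * -1) with hw'
  -- derivative of 1 - s'
  have h1s : HasDerivAt (fun s' : ℝ => 1 - s') (-1) s := by
    simpa using (hasDerivAt_id s).const_sub 1
  -- derivative of M
  have hMd : HasDerivAt M m' s := by
    have hrp : HasDerivAt (fun x : ℝ => x ^ (1/δ)) ((1/δ) * (1-s) ^ (1/δ - 1)) (1-s) :=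
      Real.hasDerivAt_rpow_const (Or.inl (ne_of_gt hs1))
    have hcomp := (hrp.comp s h1s).const_sub 1
    have heq : M = fun s' => 1 - ((fun x : ℝ => x ^ (1/δ)) ∘ fun s' : ℝ => 1 - s') s' := by
      funext s'; simp [hM s', Function.comp]
    rw [heq]
    convert hcomp using 1
    · rfl
    · rfl
    simp [hm']
  -- derivative of W
  have hWd : HasDerivAt (fun s' => W s' φ) w' s := by
    have hlog : HasDerivAt Real.log (1-s)⁻¹ (1-s) := Real.hasDerivAt_log (ne_of_gt hs1)
    have hcomp := ((hlog.comp s h1s).const_mul (ξ * ω₂ / δ)).const_add φ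
    have heq : (fun s' => W s' φ)
        = fun s' => φ + (ξ * ω₂ / δ) * (Real.log ∘ fun s' : ℝ => 1 - s') s' := by
      funext s'; simp [hW s' φ, Function.comp]
    rw [heq]
    exact hcomp
  have hcosd : HasDerivAt (fun s' => Real.cos (W s' φ)) (-Real.sin θ * w') s := hWd.cos
  have hsind : HasDerivAt (fun s' => Real.sin (W s' φ)) (Real.cos θ * w') s := hWd.sin
  have hud : HasDerivAt (fun s' => M s' * Real.cos (W s' φ))
      (m' * Real.cos θ + r * (-Real.sin θ * w')) s := hMd.mul hcosd
  have hvd : HasDerivAt (fun s' => M s' * Real.sin (W s' φ))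
      (m' * Real.sin θ + r * (Real.cos θ * w')) s := hMd.mul hsind
  have hPd : HasDerivAt (fun s' => ((M s' * Real.cos (W s' φ), M s' * Real.sin (W s' φ)) : ℝ × ℝ))
      ((m' * Real.cos θ + r * (-Real.sin θ * w'), m' * Real.sin θ + r * (Real.cos θ * w'))) s :=
    hud.prodMk hvd
  set p : ℝ × ℝ := (r * Real.cos θ, r * Real.sin θ) with hp
  set Pv : ℝ × ℝ := (m' * Real.cos θ + r * (-Real.sin θ * w'),
      m' * Real.sin θ + r * (Real.cos θ * w')) with hPv
  have hΞd : HasDerivAt (fun s' => Ξ (M s' * Real.cos (W s' φ), M s' * Real.sin (W s' φ)))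
      (fderiv ℝ Ξ p Pv) s := by
    have := ((hΞ.differentiable one_ne_zero) p).hasFDerivAt.comp_hasDerivAt s hPd
    exact this
  have hNd : HasDerivAt
      (fun s' => Real.exp (-(k * Ξ (M s' * Real.cos (W s' φ), M s' * Real.sin (W s' φ)))))
      (Real.exp (-(k * Ξ p)) * -(k * fderiv ℝ Ξ p Pv)) s := by
    have hin : HasDerivAt
        (fun s' => -(k * Ξ (M s' * Real.cos (W s' φ), M s' * Real.sin (W s' φ))))
        (-(k * fderiv ℝ Ξ p Pv)) s := (hΞd.const_mul k).neg
    simpa using hin.exp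
  have hfull := (h1s.mul hNd).const_sub 1
  -- now identify the derivative value
  convert hfull using 1
  · rfl
  · rfl
  · rfl
  have hlin : (1 - s) * fderiv ℝ Ξ p Pv
      = (1/δ) * (1-s) ^ (1/δ) * fderiv ℝ Ξ p (Real.cos θ, Real.sin θ)
        - ξ * ω₂ / δ * r * fderiv ℝ Ξ p (-Real.sin θ, Real.cos θ) := by
    have hsmul : (1 - s) • Pv
        = ((1/δ) * (1-s) ^ (1/δ)) • ((Real.cos θ, Real.sin θ) : ℝ × ℝ)
          + (-(ξ * ω₂ / δ * r)) • ((-Real.sin θ, Real.cos θ) : ℝ × ℝ) := by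
      have hrw : (1-s) * (1-s) ^ (1/δ - 1) = (1-s) ^ (1/δ) := by
        nth_rewrite 1 [show (1-s) = (1-s) ^ (1:ℝ) from (Real.rpow_one _).symm]
        rw [← Real.rpow_add hs1]
        ring_nf
      have hws : (1-s) * w' = -(ξ * ω₂ / δ) := by
        rw [hw']; field_simp
      rw [hPv, Prod.smul_mk, Prod.smul_mk, Prod.smul_mk, Prod.mk_add_mk]
      have hrw' : (1-s) * m' = (1/δ) * (1-s) ^ (1/δ) := by
        rw [hm']; linear_combination (1/δ) * hrw
      simp only [smul_eq_mul, Prod.mk.injEq]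
      constructor
      · linear_combination Real.cos θ * hrw' - (r * Real.sin θ) * hws
      · linear_combination Real.sin θ * hrw' + (r * Real.cos θ) * hws
    calc (1 - s) * fderiv ℝ Ξ p Pv = fderiv ℝ Ξ p ((1-s) • Pv) := by
          rw [map_smul]; simp [smul_eq_mul]
      _ = _ := by
          rw [hsmul, map_add, map_smul, map_smul]
          simp only [smul_eq_mul]
          ring
  have hPeq : ((M s * Real.cos (W s φ), M s * Real.sin (W s φ)) : ℝ × ℝ) = p := rfl
  rw [hPeq]
  linear_combination (-(Real.exp (-(k * Ξ p)) * k)) * hlin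


lemma aux_hasDerivPhi (δ ξ ω₁ ω₂ : ℝ)
    (Ξ : ℝ × ℝ → ℝ) (hΞ : ContDiff ℝ 1 Ξ) (M : ℝ → ℝ) (W : ℝ → ℝ → ℝ)
    (hW : ∀ s φ : ℝ, W s φ = φ + (ξ * ω₂ / δ) * Real.log (1 - s))
    (s : ℝ) (φ : ℝ) :
    HasDerivAt (fun φ' => 1 - (1 - s) *
        Real.exp (-(δ / (ξ * ω₁) * Ξ (M s * Real.cos (W s φ'), M s * Real.sin (W s φ')))))
      ((1 - s) * (δ / (ξ * ω₁) *
        (Real.exp (-(δ / (ξ * ω₁) * Ξ (M s * Real.cos (W s φ), M s * Real.sin (W s φ)))) *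
          (M s * fderiv ℝ Ξ (M s * Real.cos (W s φ), M s * Real.sin (W s φ))
            (-Real.sin (W s φ), Real.cos (W s φ))))) ) φ := by
  set k := δ / (ξ * ω₁) with hk
  set θ := W s φ with hθ
  set r := M s with hr
  have hWd : HasDerivAt (fun φ' => W s φ') 1 φ := by
    have : (fun φ' => W s φ') = fun φ' => φ' + (ξ * ω₂ / δ) * Real.log (1 - s) := by
      funext φ'; exact hW s φ'
    rw [this]
    simpa using (hasDerivAt_id φ).add_const ((ξ * ω₂ / δ) * Real.log (1 - s))
  have hcosd : HasDerivAt (fun φ' => Real.cos (W s φ')) (-Real.sin θ * 1) φ := hWd.cos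
  have hsind : HasDerivAt (fun φ' => Real.sin (W s φ')) (Real.cos θ * 1) φ := hWd.sin
  have hud : HasDerivAt (fun φ' => M s * Real.cos (W s φ')) (r * (-Real.sin θ * 1)) φ :=
    hcosd.const_mul r
  have hvd : HasDerivAt (fun φ' => M s * Real.sin (W s φ')) (r * (Real.cos θ * 1)) φ :=
    hsind.const_mul r
  have hPd : HasDerivAt (fun φ' => ((M s * Real.cos (W s φ'), M s * Real.sin (W s φ')) : ℝ × ℝ))
      ((r * (-Real.sin θ * 1), r * (Real.cos θ * 1))) φ := hud.prodMk hvd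
  set p : ℝ × ℝ := (r * Real.cos θ, r * Real.sin θ) with hp
  have hΞd : HasDerivAt (fun φ' => Ξ (M s * Real.cos (W s φ'), M s * Real.sin (W s φ')))
      (fderiv ℝ Ξ p (r * (-Real.sin θ * 1), r * (Real.cos θ * 1))) φ := by
    have := ((hΞ.differentiable one_ne_zero) p).hasFDerivAt.comp_hasDerivAt φ hPd
    exact this
  have hNd : HasDerivAt
      (fun φ' => Real.exp (-(k * Ξ (M s * Real.cos (W s φ'), M s * Real.sin (W s φ')))))
      (Real.exp (-(k * Ξ p)) * -(k * fderiv ℝ Ξ p (r * (-Real.sin θ * 1), r * (Real.cos θ * 1)))) φ := by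
    have hin := (hΞd.const_mul k).neg
    simpa using hin.exp
  have hfull := (hNd.const_mul (1 - s)).const_sub 1
  convert hfull using 1
  · rfl
  · rfl
  have hlin : fderiv ℝ Ξ p (r * (-Real.sin θ * 1), r * (Real.cos θ * 1))
      = r * fderiv ℝ Ξ p (-Real.sin θ, Real.cos θ) := by
    have hsm : ((r * (-Real.sin θ * 1), r * (Real.cos θ * 1)) : ℝ × ℝ)
        = r • ((-Real.sin θ, Real.cos θ) : ℝ × ℝ) := by
      simp only [Prod.smul_mk, smul_eq_mul, Prod.mk.injEq]
      constructor <;> ring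
    rw [hsm, map_smul, smul_eq_mul]
  rw [hlin]
  ring

lemma aux_key4 (K t : ℝ) (hK : 0 ≤ K) (ht : 0 < t) : K * (t / (4 * (K + 1))) ≤ t / 4 := by
  rw [mul_comm, div_mul_eq_mul_div, div_le_div_iff₀ (by positivity) (by norm_num)]
  nlinarith

set_option maxHeartbeats 2000000 in
/-- Claim 4 of Proposition 5.5: with `h(s,φ) = 1 − exp(−(δ/(ξω₁))Υ(s,φ))`,
uniformly in `φ ∈ ℝ`: (i) `∂h/∂s(s,φ) → exp(−δC/(ξω₁)) ≠ 0` as `s → 1⁻`,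
and (ii) `∂h/∂φ(s,φ) → 0` as `s → 1⁻`. -/
theorem stmt_13 (δ ξ ω₁ ω₂ C : ℝ) (hδ : 0 < δ) (hξ : 0 < ξ) (hω₁ : 0 < ω₁) (hω₂ : 0 < ω₂)
    (Ξ : ℝ × ℝ → ℝ) (hΞ : ContDiff ℝ 1 Ξ)
    (hconst : ∀ p : ℝ × ℝ, p.1 ^ 2 + p.2 ^ 2 = 1 → Ξ p = C)
    (M : ℝ → ℝ) (W : ℝ → ℝ → ℝ) (Υ : ℝ → ℝ → ℝ) (hfun : ℝ → ℝ → ℝ)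
    (hM : ∀ s : ℝ, M s = 1 - (1 - s) ^ (1 / δ))
    (hW : ∀ s φ : ℝ, W s φ = φ + (ξ * ω₂ / δ) * Real.log (1 - s))
    (hΥ : ∀ s φ : ℝ, Υ s φ =
      Ξ (M s * Real.cos (W s φ), M s * Real.sin (W s φ))
        - (ξ * ω₁ / δ) * Real.log (1 - s))
    (hh : ∀ s φ : ℝ, hfun s φ = 1 - Real.exp (-(δ / (ξ * ω₁)) * Υ s φ)) :
    Real.exp (-(δ * C) / (ξ * ω₁)) ≠ 0 ∧
    (∀ η > (0 : ℝ), ∃ s₀ ∈ Set.Ioo (0 : ℝ) 1, ∀ s ∈ Set.Ioo s₀ 1, ∀ φ : ℝ,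
      |deriv (fun s' => hfun s' φ) s - Real.exp (-(δ * C) / (ξ * ω₁))| < η) ∧
    (∀ η > (0 : ℝ), ∃ s₀ ∈ Set.Ioo (0 : ℝ) 1, ∀ s ∈ Set.Ioo s₀ 1, ∀ φ : ℝ,
      |deriv (fun φ' => hfun s φ') φ| < η) := by
  have hξω : (0:ℝ) < ξ * ω₁ := mul_pos hξ hω₁
  set k := δ / (ξ * ω₁) with hk
  have hk0 : 0 < k := div_pos hδ hξω
  have he0 : Real.exp (-(δ * C) / (ξ * ω₁)) = Real.exp (-(k * C)) := by
    congr 1; rw [hk]; ring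
  -- the two comparison functions
  set A : ℝ × ℝ → ℝ :=
    fun q => Real.exp (-(k * Ξ (q.1 * Real.cos q.2, q.1 * Real.sin q.2))) with hA
  set Bf : ℝ × ℝ → ℝ :=
    fun q => fderiv ℝ Ξ (q.1 * Real.cos q.2, q.1 * Real.sin q.2)
      (-Real.sin q.2, Real.cos q.2) with hB
  have hΞc : Continuous Ξ := hΞ.continuous
  have hpt : Continuous fun q : ℝ × ℝ => ((q.1 * Real.cos q.2, q.1 * Real.sin q.2) : ℝ × ℝ) := by
    fun_prop
  have contA : Continuous A := by
    rw [hA]; fun_prop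
  have contB : Continuous Bf := by
    rw [hB]
    exact Continuous.clm_apply ((hΞ.continuous_fderiv one_ne_zero).comp hpt) (by fun_prop)
  have hA1 : ∀ θ, A (1, θ) = Real.exp (-(k * C)) := by
    intro θ
    simp only [hA]
    rw [hconst _ (by simp [Real.cos_sq_add_sin_sq])]
  have hB1 : ∀ θ, Bf (1, θ) = 0 := by
    intro θ
    simp only [hB, one_mul]
    exact aux_tangent Ξ C hΞ hconst θ
  have hAper : ∀ r θ θ', Real.cos θ' = Real.cos θ → Real.sin θ' = Real.sin θ →
      A (r, θ') = A (r, θ) := by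
    intro r θ θ' h1 h2; simp only [hA]; rw [h1, h2]
  have hBper : ∀ r θ θ', Real.cos θ' = Real.cos θ → Real.sin θ' = Real.sin θ →
      Bf (r, θ') = Bf (r, θ) := by
    intro r θ θ' h1 h2; simp only [hB]; rw [h1, h2]
  -- bounds on the closed unit ball
  obtain ⟨B₁, hB₁⟩ := (isCompact_closedBall (0:ℝ×ℝ) 1).exists_bound_of_continuousOn
    ((hΞ.continuous_fderiv one_ne_zero).continuousOn)
  have hB₁0 : 0 ≤ B₁ :=
    le_trans (norm_nonneg _) (hB₁ 0 (Metric.mem_closedBall_self zero_le_one))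
  obtain ⟨B₀, hB₀⟩ := (isCompact_closedBall (0:ℝ×ℝ) 1).exists_bound_of_continuousOn
    hΞc.continuousOn
  set BA := Real.exp (k * B₀) with hBA
  have hBA0 : 0 < BA := Real.exp_pos _
  have hAbound : ∀ r ∈ Set.Icc (0:ℝ) 1, ∀ θ, A (r, θ) ≤ BA := by
    intro r hr θ
    simp only [hA, hBA]
    apply Real.exp_le_exp.mpr
    have h1 := hB₀ _ (aux_memball r hr θ)
    rw [Real.norm_eq_abs] at h1
    have h2 := (abs_le.mp h1).1
    nlinarith [hk0.le]
  have hApos : ∀ r θ, 0 < A (r, θ) := by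
    intro r θ; simp only [hA]; exact Real.exp_pos _
  have hopbound : ∀ r ∈ Set.Icc (0:ℝ) 1, ∀ θ, ∀ v : ℝ × ℝ, ‖v‖ ≤ 1 →
      |fderiv ℝ Ξ (r * Real.cos θ, r * Real.sin θ) v| ≤ B₁ := by
    intro r hr θ v hv
    have h1 := (fderiv ℝ Ξ (r * Real.cos θ, r * Real.sin θ)).le_opNorm v
    have h3 := hB₁ _ (aux_memball r hr θ)
    rw [← Real.norm_eq_abs]
    nlinarith [norm_nonneg (fderiv ℝ Ξ (r * Real.cos θ, r * Real.sin θ)), norm_nonneg v]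
  have hvec1 : ∀ θ : ℝ, ‖((-Real.sin θ, Real.cos θ) : ℝ × ℝ)‖ ≤ 1 := by
    intro θ
    exact aux_vecnorm _ _ (by rw [abs_neg]; exact Real.abs_sin_le_one θ) (Real.abs_cos_le_one θ)
  have hvec2 : ∀ θ : ℝ, ‖((Real.cos θ, Real.sin θ) : ℝ × ℝ)‖ ≤ 1 := by
    intro θ
    exact aux_vecnorm _ _ (Real.abs_cos_le_one θ) (Real.abs_sin_le_one θ)
  have hBfbound : ∀ r ∈ Set.Icc (0:ℝ) 1, ∀ θ, |Bf (r, θ)| ≤ B₁ := by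
    intro r hr θ
    simp only [hB]
    exact hopbound r hr θ _ (hvec1 θ)
  have UCA := aux_UC A (Real.exp (-(k * C))) contA hA1 hAper
  have UCB := aux_UC Bf 0 contB hB1 hBper
  -- derivative formulas
  have derivS : ∀ s ∈ Set.Ioo (0:ℝ) 1, ∀ φ, deriv (fun s' => hfun s' φ) s
      = A (M s, W s φ) * (1 + k * ((1/δ) * (1-s) ^ (1/δ) *
          fderiv ℝ Ξ (M s * Real.cos (W s φ), M s * Real.sin (W s φ))
            (Real.cos (W s φ), Real.sin (W s φ))
        - ξ * ω₂ / δ * M s * Bf (M s, W s φ))) := by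
    intro s hs φ
    have hev : (fun s' => hfun s' φ) =ᶠ[nhds s] (fun s' => 1 - (1 - s') *
        Real.exp (-(δ / (ξ * ω₁) * Ξ (M s' * Real.cos (W s' φ), M s' * Real.sin (W s' φ))))) := by
      filter_upwards [Iio_mem_nhds hs.2] with s' hs'
      exact aux_key δ ξ ω₁ hδ hξ hω₁ Ξ M W Υ hfun hΥ hh s' hs' φ
    rw [hev.deriv_eq]
    simp only [hA, hB]
    rw [hk]
    exact (aux_hasDerivS δ ξ ω₁ ω₂ hδ hξ hω₁ Ξ hΞ M W hM hW s hs φ).deriv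
  have derivPhi : ∀ s ∈ Set.Ioo (0:ℝ) 1, ∀ φ, deriv (fun φ' => hfun s φ') φ
      = (1-s) * (k * (A (M s, W s φ) * (M s * Bf (M s, W s φ)))) := by
    intro s hs φ
    have heq : (fun φ' => hfun s φ') = fun φ' => 1 - (1 - s) *
        Real.exp (-(δ / (ξ * ω₁) * Ξ (M s * Real.cos (W s φ'), M s * Real.sin (W s φ')))) := by
      funext φ'
      exact aux_key δ ξ ω₁ hδ hξ hω₁ Ξ M W Υ hfun hΥ hh s hs.2 φ'
    rw [heq]
    simp only [hA, hB]
    rw [hk]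
    exact (aux_hasDerivPhi δ ξ ω₁ ω₂ Ξ hΞ M W hW s φ).deriv
  -- facts about M
  have hMfacts : ∀ s ∈ Set.Ioo (0:ℝ) 1, M s ∈ Set.Icc (0:ℝ) 1 ∧ 1 - M s = (1-s) ^ (1/δ) := by
    intro s hs
    have h1 : (0:ℝ) < 1 - s := by linarith [hs.2]
    have h2 : 0 < (1-s) ^ (1/δ) := Real.rpow_pos_of_pos h1 _
    have h3 : (1-s) ^ (1/δ) ≤ 1 :=
      Real.rpow_le_one h1.le (by linarith [hs.1]) (by positivity)
    exact ⟨⟨by rw [hM]; linarith, by rw [hM]; linarith⟩, by rw [hM]; ring⟩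
  have powtrick : ∀ s ∈ Set.Ioo (0:ℝ) 1, ∀ t : ℝ, 0 < t → 1 - s < t ^ δ →
      (1-s) ^ (1/δ) < t := by
    intro s hs t ht hlt
    have h1 : (0:ℝ) < 1 - s := by linarith [hs.2]
    have h2 := Real.rpow_lt_rpow h1.le hlt (by positivity : (0:ℝ) < 1/δ)
    rwa [← Real.rpow_mul ht.le, mul_one_div, div_self (ne_of_gt hδ), Real.rpow_one] at h2
  refine ⟨Real.exp_ne_zero _, ?_, ?_⟩
  · -- part (i)
    intro η hη
    have hc₂ : (0:ℝ) < ξ * ω₂ / δ := by positivity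
    obtain ⟨dA, hdA, hUA⟩ := UCA (η/4) (by linarith)
    set εB := η / (4 * (k * BA * (ξ * ω₂ / δ) + 1)) with hεB
    have hεB0 : 0 < εB := by positivity
    obtain ⟨dB, hdB, hUB⟩ := UCB εB hεB0
    set Q := η / (4 * (k * BA * B₁ + 1)) with hQ
    have hQ0 : 0 < Q := by positivity
    set e₁ := Q * δ with he₁
    have he₁0 : 0 < e₁ := by positivity
    set d := min (1/2) (min (dA ^ δ) (min (dB ^ δ) (e₁ ^ δ))) with hd
    have hd0 : 0 < d := by
      refine lt_min (by norm_num) (lt_min (Real.rpow_pos_of_pos hdA _)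
        (lt_min (Real.rpow_pos_of_pos hdB _) (Real.rpow_pos_of_pos he₁0 _)))
    have hdhalf : d ≤ 1/2 := min_le_left _ _
    refine ⟨1 - d, ⟨by linarith, by linarith⟩, ?_⟩
    intro s hsIoo φ
    have hs : s ∈ Set.Ioo (0:ℝ) 1 := ⟨by linarith [hsIoo.1], hsIoo.2⟩
    have h1s : (0:ℝ) < 1 - s := by linarith [hs.2]
    have h1sd : 1 - s < d := by linarith [hsIoo.1]
    obtain ⟨hMIcc, hMeq⟩ := hMfacts s hs
    have hxA : (1-s) ^ (1/δ) < dA :=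
      powtrick s hs dA hdA (lt_of_lt_of_le h1sd
        (le_trans (min_le_right _ _) (min_le_left _ _)))
    have hxB : (1-s) ^ (1/δ) < dB :=
      powtrick s hs dB hdB (lt_of_lt_of_le h1sd
        (le_trans (min_le_right _ _) (le_trans (min_le_right _ _) (min_le_left _ _))))
    have hxE : (1-s) ^ (1/δ) < e₁ :=
      powtrick s hs e₁ he₁0 (lt_of_lt_of_le h1sd
        (le_trans (min_le_right _ _) (le_trans (min_le_right _ _) (min_le_right _ _))))
    rw [derivS s hs φ, he0]
    set Av := A (M s, W s φ) with hAv
    set Bv := Bf (M s, W s φ) with hBv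
    set Rv := fderiv ℝ Ξ (M s * Real.cos (W s φ), M s * Real.sin (W s φ))
      (Real.cos (W s φ), Real.sin (W s φ)) with hRv
    set c₁ := (1/δ) * (1-s) ^ (1/δ) with hc₁
    have hc₁0 : 0 ≤ c₁ := by positivity
    have hAvclose : |Av - Real.exp (-(k * C))| < η/4 :=
      hUA (M s) hMIcc (by rw [hMeq]; exact hxA) (W s φ)
    have hAvB : |Av| ≤ BA := by
      rw [abs_of_pos (hApos _ _)]
      exact hAbound (M s) hMIcc (W s φ)
    have hBvB : |Bv| < εB := by
      have := hUB (M s) hMIcc (by rw [hMeq]; exact hxB) (W s φ)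
      simpa using this
    have hRvB : |Rv| ≤ B₁ := hopbound (M s) hMIcc (W s φ) _ (hvec2 _)
    have hsplit : Av * (1 + k * (c₁ * Rv - ξ * ω₂ / δ * M s * Bv)) - Real.exp (-(k * C))
        = (Av - Real.exp (-(k * C))) + Av * (k * (c₁ * Rv - ξ * ω₂ / δ * M s * Bv)) := by
      ring
    rw [hsplit]
    have habs2 : |c₁ * Rv - ξ * ω₂ / δ * M s * Bv| ≤ c₁ * B₁ + (ξ * ω₂ / δ) * εB := by
      calc |c₁ * Rv - ξ * ω₂ / δ * M s * Bv|
          ≤ |c₁ * Rv| + |ξ * ω₂ / δ * M s * Bv| := abs_sub _ _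
        _ ≤ c₁ * B₁ + (ξ * ω₂ / δ) * εB := by
            have e1 : |c₁ * Rv| ≤ c₁ * B₁ := by
              rw [abs_mul, abs_of_nonneg hc₁0]
              exact mul_le_mul_of_nonneg_left hRvB hc₁0
            have e2 : |ξ * ω₂ / δ * M s * Bv| ≤ (ξ * ω₂ / δ) * εB := by
              rw [abs_mul, abs_mul, abs_of_pos hc₂, abs_of_nonneg hMIcc.1]
              have e3 : M s * |Bv| ≤ 1 * εB :=
                mul_le_mul hMIcc.2 hBvB.le (abs_nonneg _) zero_le_one
              nlinarith [hc₂.le]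
            linarith
    have hY : |Av * (k * (c₁ * Rv - ξ * ω₂ / δ * M s * Bv))|
        ≤ BA * (k * (c₁ * B₁ + (ξ * ω₂ / δ) * εB)) := by
      rw [abs_mul, abs_mul, abs_of_pos hk0]
      have h1 : |Av| * (k * |c₁ * Rv - ξ * ω₂ / δ * M s * Bv|)
          ≤ BA * (k * (c₁ * B₁ + (ξ * ω₂ / δ) * εB)) := by
        apply mul_le_mul hAvB (mul_le_mul_of_nonneg_left habs2 hk0.le)
          (by positivity) hBA0.le
      exact h1
    -- numeric bounds on the two error terms
    have hc₁Q : c₁ < Q := by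
      calc c₁ = (1/δ) * (1-s) ^ (1/δ) := hc₁
        _ < (1/δ) * e₁ := mul_lt_mul_of_pos_left hxE (by positivity)
        _ = Q := by
            rw [he₁, mul_comm Q δ, ← mul_assoc, one_div, inv_mul_cancel₀ (ne_of_gt hδ), one_mul]
    have hT1 : BA * (k * (c₁ * B₁)) ≤ η/4 := by
      have h1 : BA * (k * (c₁ * B₁)) ≤ (k * BA * B₁) * Q := by
        calc BA * (k * (c₁ * B₁)) = (k * BA * B₁) * c₁ := by ring
          _ ≤ (k * BA * B₁) * Q := mul_le_mul_of_nonneg_left hc₁Q.le (by positivity)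
      have h2 : (k * BA * B₁) * Q ≤ η/4 := by
        rw [hQ]
        exact aux_key4 (k * BA * B₁) η (by positivity) hη
      linarith
    have hT2 : BA * (k * ((ξ * ω₂ / δ) * εB)) ≤ η/4 := by
      have h2 : (k * BA * (ξ * ω₂ / δ)) * εB ≤ η/4 := by
        rw [hεB]
        exact aux_key4 (k * BA * (ξ * ω₂ / δ)) η (by positivity) hη
      calc BA * (k * ((ξ * ω₂ / δ) * εB)) = (k * BA * (ξ * ω₂ / δ)) * εB := by ring
        _ ≤ η/4 := h2
    calc |(Av - Real.exp (-(k * C))) + Av * (k * (c₁ * Rv - ξ * ω₂ / δ * M s * Bv))|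
        ≤ |Av - Real.exp (-(k * C))| + |Av * (k * (c₁ * Rv - ξ * ω₂ / δ * M s * Bv))| :=
          abs_add_le _ _
      _ < η/4 + BA * (k * (c₁ * B₁ + (ξ * ω₂ / δ) * εB)) := by
          apply add_lt_add_of_lt_of_le hAvclose hY
      _ ≤ η/4 + (η/4 + η/4) := by
          have : BA * (k * (c₁ * B₁ + (ξ * ω₂ / δ) * εB))
              = BA * (k * (c₁ * B₁)) + BA * (k * ((ξ * ω₂ / δ) * εB)) := by ring
          linarith
      _ < η := by linarith
  · -- part (ii)
    intro η hη
    set X := k * BA * B₁ with hX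
    have hX0 : 0 ≤ X := by positivity
    set d := min (1/2) (η / (X + 1)) with hd
    have hd0 : 0 < d := lt_min (by norm_num) (div_pos hη (by positivity))
    have hdhalf : d ≤ 1/2 := min_le_left _ _
    refine ⟨1 - d, ⟨by linarith, by linarith⟩, ?_⟩
    intro s hsIoo φ
    have hs : s ∈ Set.Ioo (0:ℝ) 1 := ⟨by linarith [hsIoo.1], hsIoo.2⟩
    have h1s : (0:ℝ) < 1 - s := by linarith [hs.2]
    have h1sd : 1 - s < η / (X + 1) :=
      lt_of_lt_of_le (by linarith [hsIoo.1]) (min_le_right _ _)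
    obtain ⟨hMIcc, _⟩ := hMfacts s hs
    rw [derivPhi s hs φ]
    have hAvB : |A (M s, W s φ)| ≤ BA := by
      rw [abs_of_pos (hApos _ _)]
      exact hAbound (M s) hMIcc (W s φ)
    have hBvB : |Bf (M s, W s φ)| ≤ B₁ := hBfbound (M s) hMIcc (W s φ)
    have hbound : |(1-s) * (k * (A (M s, W s φ) * (M s * Bf (M s, W s φ))))|
        ≤ (1-s) * (X + 1) := by
      rw [abs_mul, abs_mul, abs_mul, abs_mul, abs_of_pos h1s, abs_of_pos hk0,
        abs_of_nonneg hMIcc.1]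
      have h1 : |A (M s, W s φ)| * (M s * |Bf (M s, W s φ)|) ≤ BA * (1 * B₁) := by
        apply mul_le_mul hAvB _ (mul_nonneg hMIcc.1 (abs_nonneg _)) hBA0.le
        apply mul_le_mul hMIcc.2 hBvB (abs_nonneg _) zero_le_one
      have h2 : k * (|A (M s, W s φ)| * (M s * |Bf (M s, W s φ)|)) ≤ X + 1 := by
        calc k * (|A (M s, W s φ)| * (M s * |Bf (M s, W s φ)|))
            ≤ k * (BA * (1 * B₁)) := mul_le_mul_of_nonneg_left h1 hk0.le
          _ = X := by rw [hX]; ring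
          _ ≤ X + 1 := by linarith
      exact mul_le_mul_of_nonneg_left h2 h1s.le
    have hfin : (1-s) * (X + 1) < η := by
      rw [lt_div_iff₀ (by positivity : (0:ℝ) < X + 1)] at h1sd
      exact h1sd
    exact lt_of_le_of_lt hbound hfin
end
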